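/- arXiv:1404.2133 — 5 statements merged into one kernel-verified Lean document; each statement's English description precedes it below -/
import Mathlib

section
/- The drift function F^m of the rescaled Moran model coincides with the Eigen vector field on lattice points: for every m ≥ 1 and every x in (1/m)·P^m_N (i.e., mx is a vector of naturals summing to m), and every i in {1,…,N}, F^m_i(x) := λm · Σ_{z ∈ P^m_N} (z_i/m − x_i) p(mx, z) equals Σ_{j=1}^N f_j Q_{ji} x_j − x_i Σ_{j=1}^N f_j x_j. -/
open Finset

/-- The population obtained from `z` by removing one individual of type `i`
and adding one of type `j`. -/
def moranStep (N : ℕ) (z : Fin N → ℕ) (i j : Fin N) : Fin N → ℕ :=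
  fun k => z k - (if k = i then 1 else 0) + (if k = j then 1 else 0)

/-- The off-diagonal Moran transition probability
`p(z, z - e_i + e_j) = (z_i/m) (1/(λ m)) ∑_k f_k Q_{kj} z_k`. -/
noncomputable def moranRate (N m : ℕ) (f : Fin N → ℝ) (Q : Fin N → Fin N → ℝ)
    (lam : ℝ) (z : Fin N → ℕ) (i j : Fin N) : ℝ :=
  ((z i : ℝ) / m) * (1 / (lam * m)) * ∑ k, f k * Q k j * (z k : ℝ)

/-- The Moran transition matrix: `p(z, z - e_i + e_j)` is `moranRate` for `i ≠ j`,
other off-diagonal entries vanish, and the diagonal makes rows sum to one. -/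
noncomputable def moranP (N m : ℕ) (f : Fin N → ℝ) (Q : Fin N → Fin N → ℝ)
    (lam : ℝ) (z z' : Fin N → ℕ) : ℝ :=
  if z' = z then
    1 - ∑ i, ∑ j ∈ Finset.univ.erase i, moranRate N m f Q lam z i j
  else
    ∑ i, ∑ j ∈ Finset.univ.erase i,
      if z' = moranStep N z i j then moranRate N m f Q lam z i j else 0

/-- The drift function `F^m` of the rescaled Moran model coincides with the Eigen
vector field on the lattice points `(1/m)·P^m_N`. -/
theorem moran_drift_eq_eigen_field
    (N : ℕ) (hN : 1 ≤ N) (f : Fin N → ℝ) (hf : ∀ i, 0 ≤ f i)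
    (Q : Fin N → Fin N → ℝ) (hQ0 : ∀ i j, 0 ≤ Q i j) (hQ1 : ∀ i, ∑ j, Q i j = 1)
    (lam : ℝ) (hlam : ∀ i, f i ≤ lam) (hlam0 : 0 < lam)
    (m : ℕ) (hm : 1 ≤ m) (z : Fin N → ℕ) (hz : ∑ i, z i = m) (i : Fin N) :
    lam * m * ∑ z' ∈ Finset.Nat.antidiagonalTuple N m,
        ((z' i : ℝ) / m - (z i : ℝ) / m) * moranP N m f Q lam z z'
      = ∑ j, f j * Q j i * ((z j : ℝ) / m)
        - ((z i : ℝ) / m) * ∑ j, f j * ((z j : ℝ) / m) := by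
  have hmR : (m : ℝ) ≠ 0 := Nat.cast_ne_zero.mpr (by omega)
  have hlR : lam ≠ 0 := ne_of_gt hlam0
  have hzR : ∑ a, (z a : ℝ) = (m : ℝ) := by exact_mod_cast congrArg (Nat.cast : ℕ → ℝ) hz
  set T := Finset.Nat.antidiagonalTuple N m with hT
  -- Step 1: pointwise rewriting of the summand
  have step1 : ∀ z' ∈ T, ((z' i : ℝ) / m - (z i : ℝ) / m) * moranP N m f Q lam z z'
      = ∑ a, ∑ b ∈ univ.erase a, moranRate N m f Q lam z a b *
          (if z' = moranStep N z a b ∧ z' ≠ z then ((z' i : ℝ) / m - (z i : ℝ) / m) else 0) := by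
    intro z' _
    by_cases hzz : z' = z
    · subst hzz
      simp [moranP]
    · rw [moranP, if_neg hzz, Finset.mul_sum]
      refine Finset.sum_congr rfl fun a _ => ?_
      rw [Finset.mul_sum]
      refine Finset.sum_congr rfl fun b _ => ?_
      by_cases h : z' = moranStep N z a b
      · rw [if_pos h, if_pos ⟨h, hzz⟩]; ring
      · rw [if_neg h, if_neg (fun hc => h hc.1)]; ring
  -- Step 2: swap the sums and collapse the sum over z'
  have step2 : (∑ z' ∈ T, ((z' i : ℝ) / m - (z i : ℝ) / m) * moranP N m f Q lam z z')
      = ∑ a, ∑ b ∈ univ.erase a, moranRate N m f Q lam z a b *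
          (if moranStep N z a b ∈ T ∧ moranStep N z a b ≠ z
            then ((moranStep N z a b i : ℝ) / m - (z i : ℝ) / m) else 0) := by
    rw [Finset.sum_congr rfl step1, Finset.sum_comm]
    refine Finset.sum_congr rfl fun a _ => ?_
    rw [Finset.sum_comm]
    refine Finset.sum_congr rfl fun b _ => ?_
    rw [← Finset.mul_sum]
    congr 1
    by_cases hc : moranStep N z a b ∈ T ∧ moranStep N z a b ≠ z
    · rw [if_pos hc, Finset.sum_eq_single (moranStep N z a b)]
      · simp [hc.2]
      · intro x _ hne; simp [hne]
      · intro h; exact absurd hc.1 h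
    · rw [if_neg hc, Finset.sum_eq_zero]
      intro x hx
      by_cases h1 : x = moranStep N z a b
      · subst h1
        by_cases h2 : moranStep N z a b = z
        · rw [if_neg (fun hcond => hcond.2 h2)]
        · exact absurd ⟨hx, h2⟩ hc
      · rw [if_neg (fun hcond => h1 hcond.1)]
  -- Step 3: identify the increments
  have step3 : ∀ a b : Fin N, b ∈ univ.erase a →
      moranRate N m f Q lam z a b *
        (if moranStep N z a b ∈ T ∧ moranStep N z a b ≠ z
          then ((moranStep N z a b i : ℝ) / m - (z i : ℝ) / m) else 0)
      = moranRate N m f Q lam z a b *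
          (((if b = i then (1 : ℝ) else 0) - (if a = i then 1 else 0)) / m) := by
    intro a b hb
    have hab : ¬ b = a := (Finset.mem_erase.mp hb).1
    rcases Nat.eq_zero_or_pos (z a) with h0 | h1
    · simp [moranRate, h0]
    · have hmem : moranStep N z a b ∈ T := by
        rw [hT, Finset.Nat.mem_antidiagonalTuple]
        simp only [moranStep]
        rw [Finset.sum_add_distrib]
        have e1 : (∑ k, (if k = b then 1 else 0)) = 1 := by simp
        have e2 : (∑ k ∈ univ.erase a, z k) + z a = m := by
          rw [Finset.sum_erase_add _ _ (Finset.mem_univ a)]; exact hz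
        have e3 : (∑ k, (z k - if k = a then 1 else 0))
            = (∑ k ∈ univ.erase a, z k) + (z a - 1) := by
          rw [← Finset.sum_erase_add _ _ (Finset.mem_univ a), if_pos rfl]
          congr 1
          exact Finset.sum_congr rfl fun k hk => by
            simp [(Finset.mem_erase.mp hk).1]
        rw [e3, e1]
        omega
      have hne : moranStep N z a b ≠ z := by
        intro h
        have hb' := congrFun h b
        simp [moranStep, hab] at hb'
      rw [if_pos ⟨hmem, hne⟩]
      congr 1
      by_cases hia : i = a
      · have hbi : ¬ b = i := fun h => hab (h.trans hia)
        have hib : ¬ i = b := fun h => hbi h.symm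
        have hai : a = i := hia.symm
        have hzi : 0 < z i := by rw [hia]; exact h1
        have hsv : moranStep N z a b i = z i - 1 := by
          simp only [moranStep]
          rw [if_pos hia, if_neg hib]
          omega
        rw [hsv, if_neg hbi, if_pos hai, Nat.cast_sub hzi]

        push_cast
        ring
      · by_cases hib : i = b
        · have hbi : b = i := hib.symm
          have hai : ¬ a = i := fun h => hia h.symm
          have hsv : moranStep N z a b i = z i + 1 := by
            simp only [moranStep]
            rw [if_neg hia, if_pos hib]
            omega
          rw [hsv, if_pos hbi, if_neg hai]
          push_cast
          ring
        · have hbi : ¬ b = i := fun h => hib h.symm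
          have hai : ¬ a = i := fun h => hia h.symm
          have hsv : moranStep N z a b i = z i := by
            simp only [moranStep]
            rw [if_neg hia, if_neg hib]
            omega
          rw [hsv, if_neg hbi, if_neg hai]
          ring
  -- Step 4: compute the double sum
  have step4 : (∑ a, ∑ b ∈ univ.erase a, moranRate N m f Q lam z a b *
          (((if b = i then (1 : ℝ) else 0) - (if a = i then 1 else 0)) / m))
      = (∑ a, moranRate N m f Q lam z a i) / m
        - (∑ b, moranRate N m f Q lam z i b) / m := by
    have e0 : ∀ a : Fin N, (∑ b ∈ univ.erase a, moranRate N m f Q lam z a b *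
          (((if b = i then (1 : ℝ) else 0) - (if a = i then 1 else 0)) / m))
        = ∑ b, ((if b = i then moranRate N m f Q lam z a b / m else 0)
            - (if a = i then moranRate N m f Q lam z a b / m else 0)) := by
      intro a
      rw [Finset.sum_erase_eq_sub (Finset.mem_univ a)]
      have : moranRate N m f Q lam z a a *
          (((if a = i then (1 : ℝ) else 0) - (if a = i then 1 else 0)) / m) = 0 := by
        simp
      rw [this, sub_zero]
      refine Finset.sum_congr rfl fun b _ => ?_
      split_ifs <;> ring
    rw [Finset.sum_congr rfl fun a _ => e0 a]
    have e1 : ∀ a : Fin N, (∑ b, ((if b = i then moranRate N m f Q lam z a b / m else 0)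
          - (if a = i then moranRate N m f Q lam z a b / m else 0)))
        = moranRate N m f Q lam z a i / m
          - (if a = i then (∑ b, moranRate N m f Q lam z a b) / m else 0) := by
      intro a
      rw [Finset.sum_sub_distrib, Finset.sum_ite_eq' univ i
        (fun b => moranRate N m f Q lam z a b / m), if_pos (Finset.mem_univ i)]
      congr 1
      split_ifs with h
      · rw [Finset.sum_div]
      · simp
    rw [Finset.sum_congr rfl fun a _ => e1 a, Finset.sum_sub_distrib,
      Finset.sum_ite_eq' univ i (fun a => (∑ b, moranRate N m f Q lam z a b) / m),
      if_pos (Finset.mem_univ i), Finset.sum_div, Finset.sum_div]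
  -- Step 5: evaluate the two sums of rates
  have hA : (∑ a, moranRate N m f Q lam z a i)
      = (∑ k, f k * Q k i * (z k : ℝ)) / (lam * m) := by
    have e : ∀ a : Fin N, moranRate N m f Q lam z a i
        = (z a : ℝ) * ((∑ k, f k * Q k i * (z k : ℝ)) / (lam * m * m)) := fun a => by
      simp only [moranRate]
      ring
    rw [Finset.sum_congr rfl fun a _ => e a, ← Finset.sum_mul, hzR]
    field_simp
  have hB : (∑ b, moranRate N m f Q lam z i b)
      = (z i : ℝ) * (∑ k, f k * (z k : ℝ)) / (lam * m * m) := by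
    have e : (∑ b, ∑ k, f k * Q k b * (z k : ℝ)) = ∑ k, f k * (z k : ℝ) := by
      rw [Finset.sum_comm]
      refine Finset.sum_congr rfl fun k _ => ?_
      calc (∑ b, f k * Q k b * (z k : ℝ)) = (f k * (z k : ℝ)) * ∑ b, Q k b := by
            rw [Finset.mul_sum]; exact Finset.sum_congr rfl fun b _ => by ring
        _ = f k * (z k : ℝ) := by rw [hQ1 k, mul_one]
    simp only [moranRate]
    rw [← Finset.mul_sum, e]
    ring
  -- Assemble everything
  rw [step2, Finset.sum_congr rfl fun a _ => Finset.sum_congr rfl fun b hb => step3 a b hb,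
    step4, hA, hB]
  have RA : (∑ j, f j * Q j i * ((z j : ℝ) / m)) = (∑ k, f k * Q k i * (z k : ℝ)) / m := by
    rw [Finset.sum_div]; exact Finset.sum_congr rfl fun j _ => by ring
  have RB : (∑ j, f j * ((z j : ℝ) / m)) = (∑ k, f k * (z k : ℝ)) / m := by
    rw [Finset.sum_div]; exact Finset.sum_congr rfl fun j _ => by ring
  rw [RA, RB]
  field_simp
end

section
/- The unit simplex is forward invariant under the Eigen flow: if x : [0,∞) → ℝ^N solves x'(t) = F(x(t)) with F_i(x) = Σ_j f_j Q_{ji} x_j − x_i Σ_j f_j x_j, Q row-stochastic with nonnegative entries, f_j ≥ 0, and x(0) ∈ S_N, then x(t) ∈ S_N for all t ≥ 0. -/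
open Finset

lemma hasDerivAt_minsq (a : ℝ) :
    HasDerivAt (fun y : ℝ => (min y 0) ^ 2) (2 * min a 0) a := by
  rcases lt_trichotomy a 0 with h | h | h
  · have hev : (fun y : ℝ => (min y 0) ^ 2) =ᶠ[nhds a] fun y => y ^ 2 := by
      filter_upwards [Iio_mem_nhds h] with y hy
      simp [min_eq_left (le_of_lt (Set.mem_Iio.mp hy))]
    have hsq : HasDerivAt (fun y : ℝ => y ^ 2) (2 * a) a := by
      simpa using hasDerivAt_pow 2 a
    have h2 : HasDerivAt (fun y : ℝ => (min y 0) ^ 2) (2 * a) a :=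
      hsq.congr_of_eventuallyEq hev
    simpa [min_eq_left (le_of_lt h)] using h2
  · subst h
    rw [hasDerivAt_iff_isLittleO]
    rw [Asymptotics.isLittleO_iff]
    intro c hc
    filter_upwards [Metric.ball_mem_nhds 0 hc] with y hy
    have h1 : |min y 0| ≤ |y| := by
      rcases le_total y 0 with h' | h'
      · rw [min_eq_left h']
      · rw [min_eq_right h']; simp [abs_nonneg]
    have h2 : |y| < c := by simpa [Real.dist_eq] using hy
    have h3 : |min y 0| ^ 2 ≤ |y| * |y| := by
      nlinarith [abs_nonneg (min y 0), abs_nonneg y]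
    have hms : min (0:ℝ) 0 = 0 := min_self 0
    calc ‖(min y 0) ^ 2 - (min (0:ℝ) 0) ^ 2 - (y - 0) • (2 * min (0:ℝ) 0)‖
        = |min y 0| ^ 2 := by
          rw [hms]; simp [abs_pow, sq_abs]
      _ ≤ |y| * |y| := h3
      _ ≤ c * |y| := by nlinarith [abs_nonneg y]
      _ = c * ‖y - 0‖ := by simp [Real.norm_eq_abs]
  · have hev : (fun y : ℝ => (min y 0) ^ 2) =ᶠ[nhds a] fun _ => (0 : ℝ) := by
      filter_upwards [Ioi_mem_nhds h] with y hy
      simp [min_eq_right (le_of_lt (Set.mem_Ioi.mp hy))]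
    have h2 : HasDerivAt (fun y : ℝ => (min y 0) ^ 2) 0 a :=
      (hasDerivAt_const a (0:ℝ)).congr_of_eventuallyEq hev
    simpa [min_eq_right (le_of_lt h)] using h2

lemma min_mul_self' (a : ℝ) : min a 0 * a = (min a 0) ^ 2 := by
  rcases le_total a 0 with h | h
  · rw [min_eq_left h]; ring
  · rw [min_eq_right h]; ring

/-- The unit simplex is forward invariant under the Eigen flow. -/
theorem eigen_flow_simplex_invariant
    (N : ℕ) (hN : 1 ≤ N) (f : Fin N → ℝ) (hf : ∀ j, 0 ≤ f j)
    (Q : Fin N → Fin N → ℝ) (hQ0 : ∀ i j, 0 ≤ Q i j) (hQ1 : ∀ i, ∑ j, Q i j = 1)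
    (x : ℝ → Fin N → ℝ)
    (hderiv : ∀ t ≥ (0 : ℝ), ∀ i, HasDerivWithinAt (fun s => x s i)
      (∑ j, f j * Q j i * x t j - x t i * ∑ j, f j * x t j) (Set.Ici 0) t)
    (h0 : (∀ i, 0 ≤ x 0 i) ∧ ∑ i, x 0 i = 1) :
    ∀ t ≥ (0 : ℝ), (∀ i, 0 ≤ x t i) ∧ ∑ i, x t i = 1 := by
  intro t ht
  set φ : ℝ → ℝ := fun s => ∑ j, f j * x s j with hφdef
  have contx : ∀ i, ContinuousOn (fun s => x s i) (Set.Ici 0) := fun i s hs =>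
    (hderiv s hs i).continuousWithinAt
  have contφ : ContinuousOn φ (Set.Icc 0 t) := by
    apply continuousOn_finset_sum
    intro j _
    exact (continuousOn_const.mul ((contx j).mono Set.Icc_subset_Ici_self))
  obtain ⟨C0, hC0⟩ := isCompact_Icc.exists_bound_of_continuousOn contφ
  set C : ℝ := max C0 0 with hCdef
  have hC : ∀ s ∈ Set.Icc (0:ℝ) t, |φ s| ≤ C := fun s hs =>
    le_trans (hC0 s hs) (le_max_left _ _)
  have hCnn : (0:ℝ) ≤ C := le_max_right _ _
  set F : ℝ := ∑ j, f j with hFdef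
  have hFnn : 0 ≤ F := Finset.sum_nonneg fun j _ => hf j
  have hfF : ∀ j, f j ≤ F := fun j =>
    Finset.single_le_sum (fun k _ => hf k) (Finset.mem_univ j)
  have hQle : ∀ j i, Q j i ≤ 1 := fun j i => by
    have := Finset.single_le_sum (fun k (_ : k ∈ Finset.univ) => hQ0 j k) (Finset.mem_univ i)
    rw [hQ1 j] at this
    exact this
  set K : ℝ := 2 * F + 2 * C with hKdef
  -- Part 1 : nonnegativity via W = ∑ (min (x s i) 0)^2
  set m : ℝ → Fin N → ℝ := fun s i => min (x s i) 0 with hmdef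
  set W : ℝ → ℝ := fun s => ∑ i, (m s i) ^ 2 with hWdef
  set W' : ℝ → ℝ := fun s =>
    ∑ i, 2 * m s i * (∑ j, f j * Q j i * x s j - x s i * φ s) with hW'def
  have hW : ∀ s ∈ Set.Ici (0:ℝ), HasDerivWithinAt W (W' s) (Set.Ici 0) s := by
    intro s hs
    apply HasDerivWithinAt.fun_sum
    intro i _
    exact (hasDerivAt_minsq (x s i)).comp_hasDerivWithinAt s (hderiv s hs i)
  have contW : ContinuousOn W (Set.Icc 0 t) := fun s hs =>
    ((hW s hs.1).continuousWithinAt).mono Set.Icc_subset_Ici_self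
  have bound : ∀ s ∈ Set.Ico (0:ℝ) t, W' s ≤ K * W s + 0 := by
    intro s hs
    have hφC : |φ s| ≤ C := hC s ⟨hs.1, le_of_lt hs.2⟩
    have key : ∀ i, 2 * m s i * (∑ j, f j * Q j i * x s j - x s i * φ s)
        ≤ (∑ j, f j * Q j i * ((m s i) ^ 2 + (m s j) ^ 2)) + 2 * C * (m s i) ^ 2 := by
      intro i
      have ha : 2 * m s i * (∑ j, f j * Q j i * x s j)
          ≤ ∑ j, f j * Q j i * ((m s i) ^ 2 + (m s j) ^ 2) := by
        rw [Finset.mul_sum]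
        apply Finset.sum_le_sum
        intro j _
        have hfQ : 0 ≤ f j * Q j i := mul_nonneg (hf j) (hQ0 j i)
        have hmi : m s i ≤ 0 := min_le_right _ _
        have hxm : m s j ≤ x s j := min_le_left _ _
        nlinarith [mul_nonneg hfQ (sq_nonneg (m s i - m s j)),
          mul_nonneg hfQ (mul_nonneg (neg_nonneg.2 hmi) (sub_nonneg.2 hxm))]
      have hb : -(2 * m s i * (x s i * φ s)) ≤ 2 * C * (m s i) ^ 2 := by
        have hmm : m s i * x s i = (m s i) ^ 2 := min_mul_self' (x s i)
        nlinarith [sq_nonneg (m s i), abs_nonneg (φ s), neg_abs_le (φ s), le_abs_self (φ s)]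
      nlinarith [ha, hb]
    have sum1 : ∑ i, ∑ j, f j * Q j i * (m s i) ^ 2 ≤ F * W s := by
      calc ∑ i, ∑ j, f j * Q j i * (m s i) ^ 2 ≤ ∑ i, F * (m s i) ^ 2 := by
            apply Finset.sum_le_sum
            intro i _
            calc ∑ j, f j * Q j i * (m s i) ^ 2 ≤ ∑ j, f j * (m s i) ^ 2 := by
                  apply Finset.sum_le_sum
                  intro j _
                  nlinarith [mul_nonneg (mul_nonneg (hf j) (sub_nonneg.2 (hQle j i)))
                    (sq_nonneg (m s i))]
              _ = (∑ j, f j) * (m s i) ^ 2 := (Finset.sum_mul _ _ _).symm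
        _ = F * W s := (Finset.mul_sum _ _ _).symm
    have sum2 : ∑ i, ∑ j, f j * Q j i * (m s j) ^ 2 ≤ F * W s := by
      rw [Finset.sum_comm]
      calc ∑ j, ∑ i, f j * Q j i * (m s j) ^ 2 = ∑ j, f j * (m s j) ^ 2 := by
            refine Finset.sum_congr rfl fun j _ => ?_
            have : ∑ i, f j * Q j i * (m s j) ^ 2 = f j * (m s j) ^ 2 * ∑ i, Q j i := by
              rw [Finset.mul_sum]
              exact Finset.sum_congr rfl fun i _ => by ring
            rw [this, hQ1 j, mul_one]
        _ ≤ ∑ j, F * (m s j) ^ 2 :=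
            Finset.sum_le_sum fun j _ => mul_le_mul_of_nonneg_right (hfF j) (sq_nonneg _)
        _ = F * W s := (Finset.mul_sum _ _ _).symm
    have sum3 : ∑ i, 2 * C * (m s i) ^ 2 = 2 * C * W s := (Finset.mul_sum _ _ _).symm
    calc W' s ≤ ∑ i, ((∑ j, f j * Q j i * ((m s i) ^ 2 + (m s j) ^ 2)) + 2 * C * (m s i) ^ 2) :=
          Finset.sum_le_sum fun i _ => key i
      _ = (∑ i, ∑ j, f j * Q j i * (m s i) ^ 2) + (∑ i, ∑ j, f j * Q j i * (m s j) ^ 2)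
          + ∑ i, 2 * C * (m s i) ^ 2 := by
          rw [Finset.sum_add_distrib]
          congr 1
          rw [← Finset.sum_add_distrib]
          exact Finset.sum_congr rfl fun i _ => by
            rw [← Finset.sum_add_distrib]
            exact Finset.sum_congr rfl fun j _ => by ring
      _ ≤ F * W s + F * W s + 2 * C * W s := by linarith [sum1, sum2, sum3.le, sum3.ge]
      _ = K * W s + 0 := by rw [hKdef]; ring
  have hW0 : W 0 ≤ 0 := by
    have : W 0 = 0 := by
      apply Finset.sum_eq_zero
      intro i _
      have : m 0 i = 0 := min_eq_right (h0.1 i)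
      rw [this]; ring
    exact this.le
  have hWt : W t ≤ 0 := by
    have h := le_gronwallBound_of_liminf_deriv_right_le contW
      (fun s hs r hr => (((hW s hs.1).mono (Set.Ici_subset_Ici.mpr hs.1)).liminf_right_slope_le hr))
      hW0 bound t (Set.mem_Icc.mpr ⟨ht, le_refl t⟩)
    rwa [gronwallBound_ε0_δ0] at h
  have hnn : ∀ i, 0 ≤ x t i := by
    intro i
    have hWt0 : W t = 0 := le_antisymm hWt (Finset.sum_nonneg fun i _ => sq_nonneg _)
    have := (Finset.sum_eq_zero_iff_of_nonneg (fun i _ => sq_nonneg (m t i))).mp hWt0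
      i (Finset.mem_univ i)
    have hm0 : m t i = 0 := by
      have := sq_eq_zero_iff.mp this
      exact this
    exact min_eq_right_iff.mp hm0
  -- Part 2 : sum equals 1
  set y : ℝ → ℝ := fun s => (∑ i, x s i) - 1 with hydef
  have hy : ∀ s ∈ Set.Ici (0:ℝ), HasDerivWithinAt y (-(φ s) * y s) (Set.Ici 0) s := by
    intro s hs
    have h1 : HasDerivWithinAt (fun u => ∑ i, x u i)
        (∑ i, (∑ j, f j * Q j i * x s j - x s i * φ s)) (Set.Ici 0) s :=
      HasDerivWithinAt.fun_sum fun i _ => hderiv s hs i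
    have h2 : (∑ i, (∑ j, f j * Q j i * x s j - x s i * φ s)) = -(φ s) * y s := by
      rw [Finset.sum_sub_distrib]
      have e1 : ∑ i, ∑ j, f j * Q j i * x s j = φ s := by
        rw [Finset.sum_comm]
        calc ∑ j, ∑ i, f j * Q j i * x s j = ∑ j, f j * x s j * ∑ i, Q j i := by
              refine Finset.sum_congr rfl fun j _ => ?_
              rw [Finset.mul_sum]
              exact Finset.sum_congr rfl fun i _ => by ring
          _ = φ s := by
              refine Finset.sum_congr rfl fun j _ => ?_
              rw [hQ1 j, mul_one]
      have e2 : ∑ i, x s i * φ s = (∑ i, x s i) * φ s := (Finset.sum_mul _ _ _).symm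
      rw [e1, e2, hydef]
      ring
    rw [← h2]
    exact h1.sub_const 1
  have conty : ContinuousOn y (Set.Icc 0 t) := fun s hs =>
    ((hy s hs.1).continuousWithinAt).mono Set.Icc_subset_Ici_self
  have hyt : ‖y t‖ ≤ 0 := by
    have h := norm_le_gronwallBound_of_norm_deriv_right_le (f := y)
      (f' := fun s => -(φ s) * y s) (δ := 0) (K := C) (ε := 0) conty
      (fun s hs => (hy s hs.1).mono (Set.Ici_subset_Ici.mpr hs.1))
      (by simp [hydef, h0.2])
      (fun s hs => by
        have hφC : |φ s| ≤ C := hC s ⟨hs.1, le_of_lt hs.2⟩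
        rw [Real.norm_eq_abs, Real.norm_eq_abs, abs_mul, abs_neg]
        have := mul_le_mul_of_nonneg_right hφC (abs_nonneg (y s))
        linarith)
      t (Set.mem_Icc.mpr ⟨ht, le_refl t⟩)
    rwa [gronwallBound_ε0_δ0] at h
  have hsum : ∑ i, x t i = 1 := by
    have h00 : y t = 0 := norm_le_zero_iff.mp hyt
    have h01 : ∑ i, x t i - 1 = 0 := h00
    linarith
  exact ⟨hnn, hsum⟩
end

section
/- Existence and uniqueness for Eigen's model: for every x^0 ∈ S_N there exists a unique solution x : [0,∞) → ℝ^N of the system x_i'(t) = Σ_{j=1}^N f_j Q_{ji} x_j(t) − x_i(t) Σ_{j=1}^N f_j x_j(t), 1 ≤ i ≤ N, with x(0) = x^0, and the solution remains in S_N. -/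
set_option maxHeartbeats 1000000
set_option synthInstance.maxHeartbeats 200000

open Finset

/-- Existence and uniqueness for Eigen's model: for every `x⁰` in the unit simplex
there is a unique solution on `[0,∞)` of Eigen's equations with `x(0) = x⁰`,
and the solution remains in the simplex. -/
theorem eigen_model_existence_uniqueness
    (N : ℕ) (hN : 1 ≤ N) (f : Fin N → ℝ) (hf : ∀ j, 0 ≤ f j)
    (Q : Fin N → Fin N → ℝ) (hQ0 : ∀ i j, 0 ≤ Q i j) (hQ1 : ∀ i, ∑ j, Q i j = 1)
    (x0 : Fin N → ℝ) (hx0 : (∀ i, 0 ≤ x0 i) ∧ ∑ i, x0 i = 1) :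
    ∃ x : ℝ → Fin N → ℝ,
      (x 0 = x0 ∧
       (∀ t ≥ (0 : ℝ), ∀ i, HasDerivWithinAt (fun s => x s i)
         (∑ j, f j * Q j i * x t j - x t i * ∑ j, f j * x t j) (Set.Ici 0) t) ∧
       (∀ t ≥ (0 : ℝ), (∀ i, 0 ≤ x t i) ∧ ∑ i, x t i = 1)) ∧
      (∀ y : ℝ → Fin N → ℝ,
        y 0 = x0 →
        (∀ t ≥ (0 : ℝ), ∀ i, HasDerivWithinAt (fun s => y s i)
          (∑ j, f j * Q j i * y t j - y t i * ∑ j, f j * y t j) (Set.Ici 0) t) →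
        ∀ t ≥ (0 : ℝ), y t = x t) := by
  classical
  obtain ⟨hx0n, hx0s⟩ := hx0
  -- the linear part as a continuous linear map
  set M : Matrix (Fin N) (Fin N) ℝ := Matrix.of fun i j => f j * Q j i with hM
  set B : (Fin N → ℝ) →L[ℝ] (Fin N → ℝ) := LinearMap.toContinuousLinearMap M.mulVecLin
    with hBdef
  have hBapp : ∀ v : Fin N → ℝ, ∀ i, B v i = ∑ j, f j * Q j i * v j := by
    intro v i
    simp [hBdef, hM, Matrix.mulVec, dotProduct]
  -- the fitness functional
  set φ : (Fin N → ℝ) →L[ℝ] ℝ := ∑ j, f j • ContinuousLinearMap.proj j with hφdef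
  have hφapp : ∀ v : Fin N → ℝ, φ v = ∑ j, f j * v j := by
    intro v
    simp [hφdef]
  -- the vector field
  set F : (Fin N → ℝ) → (Fin N → ℝ) := fun v => B v - φ v • v with hFdef
  have hFapp : ∀ v : Fin N → ℝ, ∀ i,
      F v i = ∑ j, f j * Q j i * v j - v i * ∑ j, f j * v j := by
    intro v i
    simp [hFdef, hBapp, hφapp, mul_comm]
  -- B preserves nonnegativity
  have hBnn : ∀ v : Fin N → ℝ, (∀ i, 0 ≤ v i) → ∀ i, 0 ≤ B v i := by
    intro v hv i
    rw [hBapp]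
    exact Finset.sum_nonneg fun j _ => mul_nonneg (mul_nonneg (hf j) (hQ0 j i)) (hv j)
  have hpow : ∀ n : ℕ, ∀ i, 0 ≤ (B ^ n) x0 i := by
    intro n
    induction n with
    | zero => simpa using hx0n
    | succ n ih =>
        intro i
        rw [pow_succ', ContinuousLinearMap.mul_apply]
        exact hBnn _ ih i
  -- sum of the rows of B
  have hBsum : ∀ v : Fin N → ℝ, ∑ i, B v i = φ v := by
    intro v
    simp only [hBapp, hφapp]
    rw [Finset.sum_comm]
    refine Finset.sum_congr rfl fun j _ => ?_
    calc ∑ i, f j * Q j i * v j = (f j * v j) * ∑ i, Q j i := by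
          rw [Finset.mul_sum]; exact Finset.sum_congr rfl fun i _ => by ring
    _ = f j * v j := by rw [hQ1 j, mul_one]
  -- the linear trajectory
  set w : ℝ → Fin N → ℝ := fun t => NormedSpace.exp (t • B) x0 with hwdef
  have hw0 : w 0 = x0 := by
    simp [hwdef, NormedSpace.exp_zero]
  have hwd : ∀ t : ℝ, HasDerivAt w (B (w t)) t := by
    intro t
    have h1 := hasDerivAt_exp_smul_const' (𝕂 := ℝ) B t
    have h2 := (ContinuousLinearMap.apply ℝ (Fin N → ℝ) x0).hasFDerivAt.comp_hasDerivAt t h1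
    exact h2
  have hwnn : ∀ t : ℝ, 0 ≤ t → ∀ i, 0 ≤ w t i := by
    intro t ht i
    have hsum := NormedSpace.expSeries_summable' (𝕂 := ℝ) (t • B)
    set L : ((Fin N → ℝ) →L[ℝ] (Fin N → ℝ)) →L[ℝ] ℝ :=
      (ContinuousLinearMap.proj i).comp (ContinuousLinearMap.apply ℝ (Fin N → ℝ) x0) with hL
    have h1 : w t i = ∑' n : ℕ, L (((n.factorial : ℝ))⁻¹ • (t • B) ^ n) := by
      have h2 := L.map_tsum hsum
      have h3 : w t i = L (NormedSpace.exp (t • B)) := by simp [hwdef, hL]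
      rw [h3, NormedSpace.exp_eq_tsum ℝ, h2]
    rw [h1]
    refine tsum_nonneg fun n => ?_
    have h4 : L (((n.factorial : ℝ))⁻¹ • (t • B) ^ n)
        = ((n.factorial : ℝ))⁻¹ * (t ^ n * ((B ^ n) x0 i)) := by
      rw [smul_pow]
      simp [hL, mul_assoc]
    rw [h4]
    have := hpow n i
    positivity
  -- the total mass
  set S : ℝ → ℝ := fun t => ∑ i, w t i with hSdef
  have hSd : ∀ t : ℝ, HasDerivAt S (φ (w t)) t := by
    intro t
    have h1 : HasDerivAt (fun u => ∑ i, w u i) (∑ i, B (w t) i) t :=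
      HasDerivAt.fun_sum fun i _ => hasDerivAt_pi.1 (hwd t) i
    rw [hBsum] at h1
    exact h1
  have hS0 : S 0 = 1 := by simp [hSdef, hw0, hx0s]
  have hSmono : MonotoneOn S (Set.Ici (0 : ℝ)) := by
    refine monotoneOn_of_deriv_nonneg (convex_Ici 0)
      (fun u _ => ((hSd u).continuousAt).continuousWithinAt)
      (fun u _ => ((hSd u).differentiableAt).differentiableWithinAt) ?_
    intro u hu
    rw [interior_Ici] at hu
    rw [(hSd u).deriv, hφapp]
    exact Finset.sum_nonneg fun j _ => mul_nonneg (hf j) (hwnn u hu.le j)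
  have hS1 : ∀ t : ℝ, 0 ≤ t → 1 ≤ S t := by
    intro t ht
    have := hSmono (Set.self_mem_Ici) (Set.mem_Ici.2 ht) ht
    rwa [hS0] at this
  have hSpos : ∀ t : ℝ, 0 ≤ t → 0 < S t := fun t ht => lt_of_lt_of_le one_pos (hS1 t ht)
  -- the candidate solution
  set x : ℝ → Fin N → ℝ := fun t => (S t)⁻¹ • w t with hxdef
  have hx0eq : x 0 = x0 := by simp [hxdef, hS0, hw0]
  have hxw : ∀ t i, x t i = (S t)⁻¹ * w t i := fun t i => rfl
  have hxF : ∀ t : ℝ, 0 ≤ t → HasDerivAt x (F (x t)) t := by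
    intro t ht
    have hSne : S t ≠ 0 := (hSpos t ht).ne'
    have h1 : HasDerivAt (fun u => (S u)⁻¹) (-(φ (w t)) / (S t) ^ 2) t := (hSd t).inv hSne
    have h2 := h1.smul (hwd t)
    convert h2 using 1
    · rfl
    · rfl
    · rfl
    · rfl
    funext i
    have hBx : B (x t) i = (S t)⁻¹ * B (w t) i := by
      rw [hBapp, hBapp, Finset.mul_sum]
      exact Finset.sum_congr rfl fun j _ => by rw [hxw]; ring
    have hφx : φ (x t) = (S t)⁻¹ * φ (w t) := by
      rw [hφapp, hφapp, Finset.mul_sum]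
      exact Finset.sum_congr rfl fun j _ => by rw [hxw]; ring
    have : F (x t) i = B (x t) i - φ (x t) * x t i := by simp [hFdef]
    rw [this, hBx, hφx, hxw]
    simp only [Pi.add_apply, Pi.smul_apply, smul_eq_mul]
    field_simp
    ring
  refine ⟨x, ⟨hx0eq, ?_, ?_⟩, ?_⟩
  · -- derivative clause
    intro t ht i
    rw [← hFapp]
    exact (hasDerivAt_pi.1 (hxF t ht) i).hasDerivWithinAt
  · -- stays in simplex
    intro t ht
    constructor
    · intro i
      rw [hxw]
      exact mul_nonneg (inv_nonneg.2 (hSpos t ht).le) (hwnn t ht i)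
    · have : ∑ i, x t i = (S t)⁻¹ * S t := by
        rw [hSdef, Finset.mul_sum]
        exact Finset.sum_congr rfl fun i _ => rfl
      rw [this, inv_mul_cancel₀ (hSpos t ht).ne']
  · -- uniqueness
    intro z hz0 hzd t ht
    rcases eq_or_lt_of_le ht with h | htpos
    · rw [← h, hz0, hx0eq]
    -- E-valued derivative for z
    have hzd' : ∀ u : ℝ, 0 ≤ u → HasDerivWithinAt z (F (z u)) (Set.Ici 0) u := by
      intro u hu
      refine hasDerivWithinAt_pi.2 fun i => ?_
      rw [hFapp]
      exact hzd u hu i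
    -- continuity
    have hzc : ContinuousOn z (Set.Icc 0 t) := by
      intro u hu
      exact ((hzd' u hu.1).continuousWithinAt).mono (fun v hv => hv.1)
    have hxc : ContinuousOn x (Set.Icc 0 t) := fun u hu =>
      ((hxF u hu.1).continuousAt).continuousWithinAt
    -- bounds
    obtain ⟨Rz, hRz⟩ := (isCompact_Icc).exists_bound_of_continuousOn hzc
    obtain ⟨Rx, hRx⟩ := (isCompact_Icc).exists_bound_of_continuousOn hxc
    set R : ℝ := max Rz Rx with hRdef
    have hzR : ∀ u ∈ Set.Icc (0:ℝ) t, ‖z u‖ ≤ R := fun u hu =>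
      (hRz u hu).trans (le_max_left _ _)
    have hxR : ∀ u ∈ Set.Icc (0:ℝ) t, ‖x u‖ ≤ R := fun u hu =>
      (hRx u hu).trans (le_max_right _ _)
    have hR0 : 0 ≤ R := le_trans (norm_nonneg (z 0)) (hzR 0 ⟨le_refl 0, ht⟩)
    -- Lipschitz constant
    set K : NNReal := ‖B‖₊ + 2 * R.toNNReal * ‖φ‖₊ with hKdef
    have hKcoe : (K : ℝ) = ‖B‖ + 2 * R * ‖φ‖ := by
      simp [hKdef, Real.coe_toNNReal _ hR0]
      try ring
    have hlip : ∀ u : ℝ, LipschitzOnWith K F (Metric.closedBall 0 R) := by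
      intro _
      refine LipschitzOnWith.of_dist_le_mul fun u hu v hv => ?_
      rw [dist_eq_norm, dist_eq_norm, hKcoe]
      have hu' : ‖u‖ ≤ R := mem_closedBall_zero_iff.1 hu
      have hv' : ‖v‖ ≤ R := mem_closedBall_zero_iff.1 hv
      have hsplit : F u - F v = B (u - v) - φ u • (u - v) - (φ (u - v)) • v := by
        simp only [hFdef, map_sub, sub_smul, smul_sub]
        abel
      rw [hsplit]
      have e1 : ‖B (u - v)‖ ≤ ‖B‖ * ‖u - v‖ := B.le_opNorm _
      have e2 : ‖φ u • (u - v)‖ ≤ ‖φ‖ * R * ‖u - v‖ := by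
        rw [norm_smul]
        have : ‖φ u‖ ≤ ‖φ‖ * R := le_trans (φ.le_opNorm u)
          (mul_le_mul_of_nonneg_left hu' (norm_nonneg φ))
        exact mul_le_mul_of_nonneg_right this (norm_nonneg _)
      have e3 : ‖(φ (u - v)) • v‖ ≤ ‖φ‖ * R * ‖u - v‖ := by
        rw [norm_smul]
        calc ‖φ (u - v)‖ * ‖v‖ ≤ (‖φ‖ * ‖u - v‖) * R :=
              mul_le_mul (φ.le_opNorm _) hv' (norm_nonneg _)
                (mul_nonneg (norm_nonneg _) (norm_nonneg _))
          _ = ‖φ‖ * R * ‖u - v‖ := by ring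
      calc ‖B (u - v) - φ u • (u - v) - (φ (u - v)) • v‖
          ≤ ‖B (u - v) - φ u • (u - v)‖ + ‖(φ (u - v)) • v‖ := norm_sub_le _ _
        _ ≤ ‖B (u - v)‖ + ‖φ u • (u - v)‖ + ‖(φ (u - v)) • v‖ := by
            have := norm_sub_le (B (u - v)) (φ u • (u - v))
            linarith
        _ ≤ ‖B‖ * ‖u - v‖ + ‖φ‖ * R * ‖u - v‖ + ‖φ‖ * R * ‖u - v‖ := by linarith
        _ = (‖B‖ + 2 * R * ‖φ‖) * ‖u - v‖ := by ring
    have key := ODE_solution_unique_of_mem_Icc_right (v := fun _ u => F u)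
      (s := fun _ => Metric.closedBall (0 : Fin N → ℝ) R) (K := K)
      (fun u _ => hlip u) hzc
      (fun u hu => (hzd' u hu.1).mono (Set.Ici_subset_Ici.2 hu.1))
      (fun u hu => mem_closedBall_zero_iff.2 (hzR u ⟨hu.1, hu.2.le⟩))
      hxc
      (fun u hu => ((hxF u hu.1).hasDerivWithinAt))
      (fun u hu => mem_closedBall_zero_iff.2 (hxR u ⟨hu.1, hu.2.le⟩))
      (by rw [hz0, hx0eq])
    exact key ⟨ht, le_refl t⟩
end

section
/- Kurtz-type drift identity in expectation: for the Moran chain (Z_n) with transition matrix p, for every z ∈ P^m_N, E[Z_{n+1}/m − Z_n/m | Z_n = z] = (1/(λm)) F(z/m), where F_i(x) = Σ_j f_j Q_{ji} x_j − x_i Σ_j f_j x_j. -/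
open Finset

/-- Kurtz-type drift identity in expectation: the expected one-step increment of
the rescaled Moran chain started at `z` equals `(1/(λ m)) F(z/m)`, where `F` is
the Eigen vector field. -/
theorem moran_expected_increment
    (N : ℕ) (hN : 1 ≤ N) (f : Fin N → ℝ) (hf : ∀ j, 0 ≤ f j)
    (Q : Fin N → Fin N → ℝ) (hQ0 : ∀ i j, 0 ≤ Q i j) (hQ1 : ∀ i, ∑ j, Q i j = 1)
    (lam : ℝ) (hlam : ∀ j, f j ≤ lam) (hlam0 : 0 < lam)
    (m : ℕ) (hm : 1 ≤ m) (z : Fin N → ℕ) (hz : ∑ i, z i = m) (i : Fin N) :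
    ∑ z' ∈ Finset.Nat.antidiagonalTuple N m,
        ((z' i : ℝ) / m - (z i : ℝ) / m) * moranP N m f Q lam z z'
      = (1 / (lam * m)) *
        (∑ j, f j * Q j i * ((z j : ℝ) / m)
          - ((z i : ℝ) / m) * ∑ j, f j * ((z j : ℝ) / m)) := by
    classical
  have hm0 : (m : ℝ) ≠ 0 := by
    have : (0:ℝ) < m := by exact_mod_cast hm
    linarith
  set S := Finset.Nat.antidiagonalTuple N m with hS
  set rate := moranRate N m f Q lam z with hrate
  -- Step 1: the diagonal term vanishes, so we may replace moranP by its else-branch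
  have step1 : ∑ z' ∈ S, ((z' i : ℝ)/m - (z i : ℝ)/m) * moranP N m f Q lam z z'
      = ∑ z' ∈ S, ∑ a, ∑ b ∈ univ.erase a,
          (if z' = moranStep N z a b then ((z' i : ℝ)/m - (z i:ℝ)/m) * rate a b else 0) := by
    refine Finset.sum_congr rfl fun z' _ => ?_
    by_cases h : z' = z
    · subst h; simp
    · rw [moranP, if_neg h, Finset.mul_sum]
      refine Finset.sum_congr rfl fun a _ => ?_
      rw [Finset.mul_sum]
      refine Finset.sum_congr rfl fun b _ => ?_
      split <;> simp <;> exact Or.inl rfl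
  -- Step 2: swap summation order
  have step2 : ∑ z' ∈ S, ∑ a, ∑ b ∈ univ.erase a,
          (if z' = moranStep N z a b then ((z' i : ℝ)/m - (z i:ℝ)/m) * rate a b else 0)
      = ∑ a, ∑ b ∈ univ.erase a, ∑ z' ∈ S,
          (if z' = moranStep N z a b then ((z' i : ℝ)/m - (z i:ℝ)/m) * rate a b else 0) := by
    rw [Finset.sum_comm]
    exact Finset.sum_congr rfl fun a _ => Finset.sum_comm
  -- Step 3: collapse the inner sum
  have step3 : ∀ a, ∀ b ∈ univ.erase a,
      (∑ z' ∈ S, if z' = moranStep N z a b then ((z' i : ℝ)/m - (z i:ℝ)/m) * rate a b else 0)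
      = (((if b = i then (1:ℝ) else 0) - (if a = i then 1 else 0))/m) * rate a b := by
    intro a b hb
    have hab : b ≠ a := Finset.ne_of_mem_erase hb
    rw [Finset.sum_ite_eq' S (moranStep N z a b)
      (fun z' => ((z' i : ℝ)/m - (z i:ℝ)/m) * rate a b)]
    by_cases hza : z a = 0
    · have hr : rate a b = 0 := by simp [hrate, moranRate, hza]
      simp [hr]
    · have hza1 : 1 ≤ z a := Nat.one_le_iff_ne_zero.mpr hza
      have hmem : moranStep N z a b ∈ S := by
        rw [hS, Finset.Nat.mem_antidiagonalTuple]
        unfold moranStep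
        rw [Finset.sum_add_distrib,
          Finset.sum_tsub_distrib _ (fun k _ => by split <;> simp_all)]
        simp [Finset.sum_ite_eq', hz]
        omega
      rw [if_pos hmem]
      have hinc : ((moranStep N z a b i : ℝ)/m - (z i:ℝ)/m)
          = (((if b = i then (1:ℝ) else 0) - (if a = i then 1 else 0))/m) := by
        by_cases hia : i = a
        · subst hia
          have hbi : b ≠ i := hab
          have hv : moranStep N z i b i = z i - 1 := by
            simp [moranStep, hbi.symm]
          rw [hv, Nat.cast_sub hza1]
          simp [hbi]
          ring
        · by_cases hib : i = b
          · subst hib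
            have hv : moranStep N z a i i = z i + 1 := by
              simp [moranStep, hia]
            rw [hv]
            push_cast
            simp [Ne.symm hia]
            ring
          · have hv : moranStep N z a b i = z i := by
              simp [moranStep, hia, hib]
            rw [hv]
            simp [Ne.symm hia, Ne.symm hib]
      rw [hinc]
  -- Step 4: extend the erased sums to full sums (diagonal terms vanish)
  have step4 : ∀ a : Fin N, ∑ b ∈ univ.erase a,
        (((if b = i then (1:ℝ) else 0) - (if a = i then 1 else 0))/m) * rate a b
      = ∑ b, (((if b = i then (1:ℝ) else 0) - (if a = i then 1 else 0))/m) * rate a b := by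
    intro a
    rw [← Finset.sum_erase_add _ _ (Finset.mem_univ a)]
    simp
  rw [step1, step2]
  calc ∑ a, ∑ b ∈ univ.erase a, ∑ z' ∈ S,
          (if z' = moranStep N z a b then ((z' i : ℝ)/m - (z i:ℝ)/m) * rate a b else 0)
      = ∑ a, ∑ b, (((if b = i then (1:ℝ) else 0) - (if a = i then 1 else 0))/m) * rate a b := by
        refine Finset.sum_congr rfl fun a _ => ?_
        rw [← step4 a]
        exact Finset.sum_congr rfl fun b hb => step3 a b hb
    _ = ∑ a, ∑ b, ((if b = i then ((z a:ℝ)/m) * (1/(lam*m)) * ((∑ k, f k * Q k i * (z k:ℝ))/m) else 0)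
          - (if a = i then ((z i:ℝ)/m) * (1/(lam*m)) * ((∑ k, f k * Q k b * (z k:ℝ))/m) else 0)) := by
        refine Finset.sum_congr rfl fun a _ => Finset.sum_congr rfl fun b _ => ?_
        rw [hrate, moranRate]
        by_cases hb : b = i <;> by_cases ha : a = i <;> simp [hb, ha] <;> ring
    _ = (∑ a, ((z a:ℝ)/m) * (1/(lam*m)) * ((∑ k, f k * Q k i * (z k:ℝ))/m))
        - ∑ b, ((z i:ℝ)/m) * (1/(lam*m)) * ((∑ k, f k * Q k b * (z k:ℝ))/m) := by
        simp only [Finset.sum_sub_distrib]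
        congr 1
        · exact Finset.sum_congr rfl fun a _ => by
            rw [Finset.sum_ite_eq' univ i
              (fun b => ((z a:ℝ)/m) * (1/(lam*m)) * ((∑ k, f k * Q k i * (z k:ℝ))/m)), if_pos (mem_univ i)]
        · rw [Finset.sum_comm]
          exact Finset.sum_congr rfl fun b _ => by
            rw [Finset.sum_ite_eq' univ i
              (fun a => ((z i:ℝ)/m) * (1/(lam*m)) * ((∑ k, f k * Q k b * (z k:ℝ))/m)), if_pos (mem_univ i)]
    _ = (1 / (lam * m)) *
        (∑ j, f j * Q j i * ((z j : ℝ) / m)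
          - ((z i : ℝ) / m) * ∑ j, f j * ((z j : ℝ) / m)) := by
        have hzR : (∑ a, (z a : ℝ)) = m := by exact_mod_cast hz
        have hswap : ∑ b, ∑ k, f k * Q k b * (z k:ℝ) = ∑ k, f k * (z k:ℝ) := by
          rw [Finset.sum_comm]
          refine Finset.sum_congr rfl fun k _ => ?_
          calc ∑ b, f k * Q k b * (z k:ℝ) = (f k * (z k:ℝ)) * ∑ b, Q k b := by
                rw [Finset.mul_sum]; exact Finset.sum_congr rfl fun b _ => by ring
            _ = f k * (z k:ℝ) := by rw [hQ1 k, mul_one]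
        have h1 : ∑ a, ((z a:ℝ)/m) * (1/(lam*m)) * ((∑ k, f k * Q k i * (z k:ℝ))/m)
            = (1/(lam*m)) * ∑ j, f j * Q j i * ((z j : ℝ) / m) := by
          have e1 : ∀ a : Fin N, ((z a:ℝ)/m) * (1/(lam*m)) * ((∑ k, f k * Q k i * (z k:ℝ))/m)
              = (z a:ℝ) * ((1/m) * (1/(lam*m)) * ((∑ k, f k * Q k i * (z k:ℝ))/m)) :=
            fun a => by ring
          rw [Finset.sum_congr rfl fun a _ => e1 a, ← Finset.sum_mul, hzR]
          have e2 : ∑ j, f j * Q j i * ((z j : ℝ) / m) = (∑ k, f k * Q k i * (z k:ℝ))/m := by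
            rw [Finset.sum_div]; exact Finset.sum_congr rfl fun j _ => by ring
          rw [e2]
          field_simp
        have h2 : ∑ b, ((z i:ℝ)/m) * (1/(lam*m)) * ((∑ k, f k * Q k b * (z k:ℝ))/m)
            = (1/(lam*m)) * (((z i : ℝ) / m) * ∑ j, f j * ((z j : ℝ) / m)) := by
          have e1 : ∀ b : Fin N, ((z i:ℝ)/m) * (1/(lam*m)) * ((∑ k, f k * Q k b * (z k:ℝ))/m)
              = (((z i:ℝ)/m) * (1/(lam*m)) * (1/m)) * (∑ k, f k * Q k b * (z k:ℝ)) :=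
            fun b => by ring
          rw [Finset.sum_congr rfl fun b _ => e1 b, ← Finset.mul_sum, hswap]
          have e2 : ∑ j, f j * ((z j : ℝ) / m) = (∑ k, f k * (z k:ℝ))/m := by
            rw [Finset.sum_div]; exact Finset.sum_congr rfl fun j _ => by ring
          rw [e2]; ring
        rw [h1, h2]; ring
end

section
/- Convergence of the Moran model to Eigen's model: let (Z_n) be the Moran chain on P^m_N and suppose Z_0/m → x^0 ∈ S_N as m → ∞. Let x(t) be the solution of Eigen's equations x_i' = Σ_j f_j Q_{ji} x_j − x_i Σ_j f_j x_j with x(0) = x^0. Then for every δ > 0 and T > 0, P( sup_{0 ≤ t ≤ T} |Z_{⌊λmt⌋}/m − x(t)| > δ ) → 0 as m → ∞. -/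
open Finset

set_option linter.unusedSectionVars false
set_option maxHeartbeats 4000000

namespace MoranAux

/-- Eigen's vector field. -/
noncomputable def eigenB (N : ℕ) (f : Fin N → ℝ) (Q : Fin N → Fin N → ℝ)
    (y : Fin N → ℝ) (l : Fin N) : ℝ :=
  ∑ k, f k * Q k l * y k - y l * ∑ k, f k * y k

/-- The state space `P^m_N` as a finset. -/
def stS (N m : ℕ) : Finset (Fin N → ℕ) :=
  (Fintype.piFinset fun _ => Finset.range (m+1)).filter (fun z => ∑ i, z i = m)

lemma mem_stS {N m : ℕ} {z : Fin N → ℕ} : z ∈ stS N m ↔ ∑ i, z i = m := by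
  simp only [stS, Finset.mem_filter, Fintype.mem_piFinset, Finset.mem_range]
  refine ⟨fun h => h.2, fun h => ⟨fun i => ?_, h⟩⟩
  have : z i ≤ m := h ▸ Finset.single_le_sum (f := fun i => z i)
    (fun _ _ => Nat.zero_le _) (Finset.mem_univ i)
  omega

section basic

variable {N m : ℕ} {f : Fin N → ℝ} {Q : Fin N → Fin N → ℝ} {lam : ℝ}
  {z z' : Fin N → ℕ}

variable (hf : ∀ j, 0 ≤ f j) (hQ0 : ∀ i j, 0 ≤ Q i j) (hQ1 : ∀ i, ∑ j, Q i j = 1)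
  (hlam : ∀ j, f j ≤ lam) (hlam0 : 0 < lam) (hm : 1 ≤ m)

include hf hQ0 hQ1 hlam hlam0 hm

lemma rate_nonneg {i j : Fin N} : 0 ≤ moranRate N m f Q lam z i j := by
  unfold moranRate
  have h1 : (0:ℝ) ≤ ((z i : ℝ)/m) := by positivity
  have h2 : (0:ℝ) ≤ 1/(lam*m) := by
    apply one_div_nonneg.mpr; exact mul_nonneg hlam0.le (Nat.cast_nonneg m)
  apply mul_nonneg (mul_nonneg h1 h2)
  exact Finset.sum_nonneg fun k _ => by
    have := hf k; have := hQ0 k j; positivity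

lemma Q_le_one {k j : Fin N} : Q k j ≤ 1 := by
  calc Q k j ≤ ∑ j', Q k j' :=
        Finset.single_le_sum (fun j' _ => hQ0 k j') (Finset.mem_univ j)
    _ = 1 := hQ1 k

lemma A_le (j : Fin N) : ∑ k, f k * Q k j * (z k : ℝ) ≤ lam * ∑ k, (z k : ℝ) := by
  rw [Finset.mul_sum]
  refine Finset.sum_le_sum fun k _ => ?_
  have h1 : f k * Q k j ≤ lam := by
    calc f k * Q k j ≤ f k * 1 := by
          exact mul_le_mul_of_nonneg_left (Q_le_one hf hQ0 hQ1 hlam hlam0 hm) (hf k)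
      _ = f k := mul_one _
      _ ≤ lam := hlam k
  have : (0:ℝ) ≤ (z k : ℝ) := Nat.cast_nonneg _
  exact mul_le_mul_of_nonneg_right h1 this

lemma A_nonneg (j : Fin N) : 0 ≤ ∑ k, f k * Q k j * (z k : ℝ) :=
  Finset.sum_nonneg fun k _ => by have := hf k; have := hQ0 k j; positivity

lemma sumA_eq : ∑ j, ∑ k, f k * Q k j * (z k : ℝ) = ∑ k, f k * (z k : ℝ) := by
  rw [Finset.sum_comm]
  refine Finset.sum_congr rfl fun k _ => ?_
  have : ∑ j, f k * Q k j * (z k : ℝ) = (f k * (z k : ℝ)) * ∑ j, Q k j := by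
    rw [Finset.mul_sum]; exact Finset.sum_congr rfl fun j _ => by ring
  rw [this, hQ1 k, mul_one]

lemma cast_sum_stS (hz : z ∈ stS N m) : ∑ k, (z k : ℝ) = m := by
  have := mem_stS.mp hz
  exact_mod_cast congrArg (Nat.cast : ℕ → ℝ) this

lemma F_nonneg : 0 ≤ ∑ k, f k * (z k : ℝ) :=
  Finset.sum_nonneg fun k _ => mul_nonneg (hf k) (Nat.cast_nonneg _)

lemma F_le (hz : z ∈ stS N m) : ∑ k, f k * (z k : ℝ) ≤ lam * m := by
  calc ∑ k, f k * (z k : ℝ) ≤ ∑ k, lam * (z k : ℝ) :=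
        Finset.sum_le_sum fun k _ =>
          mul_le_mul_of_nonneg_right (hlam k) (Nat.cast_nonneg _)
    _ = lam * ∑ k, (z k : ℝ) := by rw [Finset.mul_sum]
    _ = lam * m := by rw [cast_sum_stS hf hQ0 hQ1 hlam hlam0 hm hz]

lemma ratesum_le_one (hz : z ∈ stS N m) :
    ∑ i, ∑ j ∈ univ.erase i, moranRate N m f Q lam z i j ≤ 1 := by
  have hmR : (0:ℝ) < m := by exact_mod_cast hm
  have hlm : (0:ℝ) < lam * m := mul_pos hlam0 hmR
  have h1 : ∀ i : Fin N, ∑ j ∈ univ.erase i, moranRate N m f Q lam z i j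
      ≤ (z i : ℝ)/m := by
    intro i
    calc ∑ j ∈ univ.erase i, moranRate N m f Q lam z i j
        ≤ ∑ j, moranRate N m f Q lam z i j :=
          Finset.sum_le_sum_of_subset_of_nonneg (Finset.subset_univ _)
            (fun j _ _ => rate_nonneg hf hQ0 hQ1 hlam hlam0 hm)
      _ = (z i : ℝ)/m * ((1/(lam*m)) * ∑ j, ∑ k, f k * Q k j * (z k:ℝ)) := by
          have h1 : ∀ j : Fin N, moranRate N m f Q lam z i j
              = ((z i:ℝ)/m * (1/(lam*m))) * ∑ k, f k * Q k j * (z k:ℝ) := fun j => rfl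
          rw [Finset.sum_congr rfl (fun j _ => h1 j), ← Finset.mul_sum]
          ring
      _ = (z i : ℝ)/m * ((1/(lam*m)) * ∑ k, f k * (z k:ℝ)) := by
          rw [sumA_eq hf hQ0 hQ1 hlam hlam0 hm]
      _ ≤ (z i:ℝ)/m * 1 := by
          refine mul_le_mul_of_nonneg_left ?_ (by positivity)
          rw [one_div, inv_mul_le_iff₀ hlm, mul_one]
          exact F_le hf hQ0 hQ1 hlam hlam0 hm hz
      _ = (z i : ℝ)/m := mul_one _
  calc ∑ i, ∑ j ∈ univ.erase i, moranRate N m f Q lam z i j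
      ≤ ∑ i, (z i:ℝ)/m := Finset.sum_le_sum fun i _ => h1 i
    _ = (∑ i, (z i:ℝ))/m := by rw [Finset.sum_div]
    _ = 1 := by
        rw [cast_sum_stS hf hQ0 hQ1 hlam hlam0 hm hz]
        field_simp

lemma p_nonneg (hz : z ∈ stS N m) : 0 ≤ moranP N m f Q lam z z' := by
  unfold moranP
  split
  · linarith [ratesum_le_one hf hQ0 hQ1 hlam hlam0 hm hz]
  · refine Finset.sum_nonneg fun i _ => Finset.sum_nonneg fun j _ => ?_
    split
    · exact rate_nonneg hf hQ0 hQ1 hlam hlam0 hm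
    · exact le_refl 0

omit hf hQ0 hQ1 hlam hlam0 hm in
lemma rate_zero {i j : Fin N} (hzi : z i = 0) : moranRate N m f Q lam z i j = 0 := by
  unfold moranRate; rw [hzi]; simp

omit hf hQ0 hQ1 hlam hlam0 hm in
lemma step_ne {i j : Fin N} (hij : i ≠ j) : moranStep N z i j ≠ z := by
  intro h
  have hj := congrFun h j
  unfold moranStep at hj
  rw [if_neg (Ne.symm hij), if_pos rfl] at hj
  omega

omit hf hQ0 hQ1 hlam hlam0 hm in
lemma step_sum {i j : Fin N} (hij : i ≠ j) (hzi : 1 ≤ z i) :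
    ∑ k, moranStep N z i j k = ∑ k, z k := by
  unfold moranStep
  rw [Finset.sum_add_distrib]
  have h2 : (∑ k : Fin N, if k = j then 1 else 0) = 1 := by simp
  have h3 : (∑ k : Fin N, (z k - if k = i then 1 else 0))
      = (z i - 1) + ∑ k ∈ univ.erase i, z k := by
    rw [← Finset.add_sum_erase _ _ (Finset.mem_univ i), if_pos rfl]
    congr 1
    exact Finset.sum_congr rfl fun k hk => by
      rw [if_neg (Finset.mem_erase.mp hk).1, Nat.sub_zero]
  have h4 : ∑ k, z k = z i + ∑ k ∈ univ.erase i, z k := by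
    rw [← Finset.add_sum_erase _ _ (Finset.mem_univ i)]
  omega

omit hf hQ0 hQ1 hlam hlam0 hm in
lemma step_mem (hz : z ∈ stS N m) {i j : Fin N} (hij : i ≠ j) (hzi : 1 ≤ z i) :
    moranStep N z i j ∈ stS N m := by
  rw [mem_stS, step_sum hij hzi]; exact mem_stS.mp hz

lemma sum_p_mul (hz : z ∈ stS N m) (g : (Fin N → ℕ) → ℝ) :
    ∑ z' ∈ stS N m, moranP N m f Q lam z z' * g z'
      = moranP N m f Q lam z z * g z
        + ∑ i, ∑ j ∈ univ.erase i,
            moranRate N m f Q lam z i j * g (moranStep N z i j) := by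
  rw [← Finset.add_sum_erase _ _ hz]
  congr 1
  have hpe : ∀ z' ∈ (stS N m).erase z, moranP N m f Q lam z z' * g z'
      = ∑ i, ∑ j ∈ univ.erase i,
          (if z' = moranStep N z i j then moranRate N m f Q lam z i j * g z' else 0) := by
    intro z' hz'
    rw [moranP, if_neg (Finset.mem_erase.mp hz').1, Finset.sum_mul]
    exact Finset.sum_congr rfl fun i _ => by
      rw [Finset.sum_mul]
      exact Finset.sum_congr rfl fun j _ => by rw [ite_mul, zero_mul]
  rw [Finset.sum_congr rfl hpe, Finset.sum_comm]
  refine Finset.sum_congr rfl fun i _ => ?_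
  rw [Finset.sum_comm]
  refine Finset.sum_congr rfl fun j hj => ?_
  have hij : i ≠ j := Ne.symm (Finset.mem_erase.mp hj).1
  rw [Finset.sum_ite_eq' ((stS N m).erase z) (moranStep N z i j)
    (fun z' => moranRate N m f Q lam z i j * g z')]
  by_cases hzi : z i = 0
  · rw [rate_zero hzi]; simp
  · rw [if_pos]
    exact Finset.mem_erase.mpr ⟨step_ne hij, step_mem hz hij
      (Nat.one_le_iff_ne_zero.mpr hzi)⟩

lemma row_sum (hz : z ∈ stS N m) : ∑ z' ∈ stS N m, moranP N m f Q lam z z' = 1 := by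
  have h := sum_p_mul hf hQ0 hQ1 hlam hlam0 hm hz (fun _ => 1)
  simp only [mul_one] at h
  rw [h, moranP, if_pos rfl]; ring

lemma p_escape (hz : z ∈ stS N m) (hz' : z' ∉ stS N m) :
    moranP N m f Q lam z z' = 0 := by
  have hne : z' ≠ z := fun h => hz' (h ▸ hz)
  rw [moranP, if_neg hne]
  refine Finset.sum_eq_zero fun i _ => Finset.sum_eq_zero fun j hj => ?_
  have hij : i ≠ j := Ne.symm (Finset.mem_erase.mp hj).1
  by_cases hzi : z i = 0
  · rw [rate_zero hzi]; simp
  · rw [if_neg]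
    intro he
    exact hz' (he ▸ step_mem hz hij
      (Nat.one_le_iff_ne_zero.mpr hzi))

omit hf hQ0 hQ1 hlam hlam0 hm in
lemma step_cast {i j l : Fin N} (hij : i ≠ j) (hzi : 1 ≤ z i) :
    ((moranStep N z i j l : ℝ)) = (z l : ℝ)
      - (if l = i then 1 else 0) + (if l = j then 1 else 0) := by
  by_cases hli : l = i
  · subst hli
    have hlj : ¬ l = j := fun h => hij (h ▸ rfl)
    have h1 : moranStep N z l j l = z l - 1 := by
      simp [moranStep, hlj]
    rw [h1, Nat.cast_sub hzi]
    simp [hlj]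
  · by_cases hlj : l = j
    · subst hlj
      have h1 : moranStep N z i l l = z l + 1 := by
        simp [moranStep, hli]
      rw [h1]
      push_cast
      simp [hli]
    · have h1 : moranStep N z i j l = z l := by
        simp [moranStep, hli, hlj]
      rw [h1]
      simp [hli, hlj]

lemma p_step_bound (hz : z ∈ stS N m) (hp : moranP N m f Q lam z z' ≠ 0) (l : Fin N) :
    |(z' l:ℝ) - (z l : ℝ)| ≤ 1 := by
  by_cases h : z' = z
  · subst h; simp
  rw [moranP, if_neg h] at hp
  obtain ⟨i, -, hi⟩ := Finset.exists_ne_zero_of_sum_ne_zero hp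
  obtain ⟨j, hj, hij0⟩ := Finset.exists_ne_zero_of_sum_ne_zero hi
  have hij : i ≠ j := Ne.symm (Finset.mem_erase.mp hj).1
  have hz' : z' = moranStep N z i j := by
    by_contra hc; rw [if_neg hc] at hij0; exact hij0 rfl
  have hrate : moranRate N m f Q lam z i j ≠ 0 := by
    rw [if_pos hz'] at hij0; exact hij0
  have hzi : 1 ≤ z i := by
    rcases Nat.eq_zero_or_pos (z i) with h0 | h0
    · exact absurd (rate_zero h0) hrate
    · exact h0
  subst hz'
  rw [step_cast hij hzi]
  have hre : (z l:ℝ) - (if l = i then (1:ℝ) else 0) + (if l = j then 1 else 0) - (z l:ℝ)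
      = (if l = j then (1:ℝ) else 0) - (if l = i then 1 else 0) := by ring
  rw [hre]
  split_ifs <;> norm_num

lemma drift (hz : z ∈ stS N m) (l : Fin N) :
    ∑ z' ∈ stS N m, moranP N m f Q lam z z' * ((z' l : ℝ) - (z l : ℝ))
      = (1/lam) * eigenB N f Q (fun k => (z k : ℝ)/m) l := by
  have hmR : (0:ℝ) < m := by exact_mod_cast hm
  rw [sum_p_mul hf hQ0 hQ1 hlam hlam0 hm hz (fun z' => (z' l : ℝ) - (z l : ℝ))]
  rw [sub_self, mul_zero, zero_add]
  have hterm : ∀ i : Fin N, ∀ j ∈ univ.erase i,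
      moranRate N m f Q lam z i j * ((moranStep N z i j l : ℝ) - (z l : ℝ))
      = moranRate N m f Q lam z i j
          * ((if l = j then (1:ℝ) else 0) - (if l = i then 1 else 0)) := by
    intro i j hj
    have hij : i ≠ j := Ne.symm (Finset.mem_erase.mp hj).1
    by_cases hzi : z i = 0
    · rw [rate_zero hzi, zero_mul, zero_mul]
    · rw [step_cast hij (Nat.one_le_iff_ne_zero.mpr hzi)]
      ring_nf
  rw [Finset.sum_congr rfl (fun i _ => Finset.sum_congr rfl (hterm i))]
  -- extend inner sums to univ (the j = i term vanishes)
  have hext : ∀ i : Fin N,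
      (∑ j ∈ univ.erase i, moranRate N m f Q lam z i j
          * ((if l = j then (1:ℝ) else 0) - (if l = i then 1 else 0)))
      = ∑ j, moranRate N m f Q lam z i j
          * ((if l = j then (1:ℝ) else 0) - (if l = i then 1 else 0)) := by
    intro i
    refine Finset.sum_erase _ ?_
    by_cases hli : l = i <;> simp [hli]
  rw [Finset.sum_congr rfl (fun i _ => hext i)]
  -- now compute
  have hsplit : ∀ i : Fin N, ∀ j : Fin N,
      moranRate N m f Q lam z i j
          * ((if l = j then (1:ℝ) else 0) - (if l = i then 1 else 0))
      = (z i : ℝ) * ((1/m) * (1/(lam*m))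
            * ((∑ k, f k * Q k j * (z k:ℝ)) * (if l = j then (1:ℝ) else 0)))
        - ((z i:ℝ) * (if l = i then (1:ℝ) else 0))
            * ((1/m) * (1/(lam*m)) * (∑ k, f k * Q k j * (z k:ℝ))) := by
    intro i j; unfold moranRate; ring
  rw [Finset.sum_congr rfl (fun i _ => Finset.sum_congr rfl (fun j _ => hsplit i j))]
  simp only [Finset.sum_sub_distrib]
  have hS1 : (∑ i, ∑ j, (z i : ℝ) * ((1/m) * (1/(lam*m))
        * ((∑ k, f k * Q k j * (z k:ℝ)) * (if l = j then (1:ℝ) else 0))))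
      = (m:ℝ) * ((1/m) * (1/(lam*m)) * (∑ k, f k * Q k l * (z k:ℝ))) := by
    have hinner : ∀ i : Fin N, (∑ j, (z i : ℝ) * ((1/m) * (1/(lam*m))
        * ((∑ k, f k * Q k j * (z k:ℝ)) * (if l = j then (1:ℝ) else 0))))
        = (z i : ℝ) * ((1/m) * (1/(lam*m)) * (∑ k, f k * Q k l * (z k:ℝ))) := by
      intro i
      rw [Finset.sum_eq_single l]
      · simp
      · intro j _ hjl
        rw [if_neg (Ne.symm hjl)]
        ring
      · intro hl; exact absurd (Finset.mem_univ l) hl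
    rw [Finset.sum_congr rfl (fun i _ => hinner i), ← Finset.sum_mul,
      cast_sum_stS hf hQ0 hQ1 hlam hlam0 hm hz]
  have hS2 : (∑ i, ∑ j, ((z i:ℝ) * (if l = i then (1:ℝ) else 0))
        * ((1/m) * (1/(lam*m)) * (∑ k, f k * Q k j * (z k:ℝ))))
      = (z l : ℝ) * ((1/m) * (1/(lam*m)) * (∑ k, f k * (z k:ℝ))) := by
    have hinner : ∀ i : Fin N, (∑ j, ((z i:ℝ) * (if l = i then (1:ℝ) else 0))
        * ((1/m) * (1/(lam*m)) * (∑ k, f k * Q k j * (z k:ℝ))))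
        = ((z i:ℝ) * (if l = i then (1:ℝ) else 0))
            * ((1/m) * (1/(lam*m)) * (∑ k, f k * (z k:ℝ))) := by
      intro i
      have h1 : ∀ j : Fin N, ((z i:ℝ) * (if l = i then (1:ℝ) else 0))
            * ((1/m) * (1/(lam*m)) * (∑ k, f k * Q k j * (z k:ℝ)))
          = (((z i:ℝ) * (if l = i then (1:ℝ) else 0)) * ((1/m) * (1/(lam*m))))
              * (∑ k, f k * Q k j * (z k:ℝ)) := fun j => by ring
      rw [Finset.sum_congr rfl (fun j _ => h1 j), ← Finset.mul_sum,
        sumA_eq hf hQ0 hQ1 hlam hlam0 hm]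
      ring
    rw [Finset.sum_congr rfl (fun i _ => hinner i)]
    rw [Finset.sum_eq_single l]
    · simp
    · intro i _ hil
      rw [if_neg (Ne.symm hil)]
      ring
    · intro hl; exact absurd (Finset.mem_univ l) hl
  rw [hS1, hS2]
  unfold eigenB
  have e1 : ∑ k, f k * Q k l * ((z k:ℝ)/m) = (∑ k, f k * Q k l * (z k:ℝ))/m := by
    rw [Finset.sum_div]; exact Finset.sum_congr rfl fun k _ => by ring
  have e2 : ∑ k, f k * ((z k:ℝ)/m) = (∑ k, f k * (z k:ℝ))/m := by
    rw [Finset.sum_div]; exact Finset.sum_congr rfl fun k _ => by ring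
  rw [e1, e2]
  field_simp

lemma b_bound (l : Fin N) {y : Fin N → ℝ} (hy0 : ∀ i, 0 ≤ y i)
    (hy1 : ∑ i, y i = 1) : |eigenB N f Q y l| ≤ 2*lam := by
  have hyle : ∀ i, y i ≤ 1 := fun i =>
    hy1 ▸ Finset.single_le_sum (fun i _ => hy0 i) (Finset.mem_univ i)
  have h1 : 0 ≤ ∑ k, f k * Q k l * y k :=
    Finset.sum_nonneg fun k _ => by have := hf k; have := hQ0 k l; have := hy0 k; positivity
  have h2 : ∑ k, f k * Q k l * y k ≤ lam := by
    calc ∑ k, f k * Q k l * y k ≤ ∑ k, lam * y k := by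
          refine Finset.sum_le_sum fun k _ => ?_
          have hfq : f k * Q k l ≤ lam := by
            calc f k * Q k l ≤ f k * 1 :=
                  mul_le_mul_of_nonneg_left (Q_le_one hf hQ0 hQ1 hlam hlam0 hm) (hf k)
              _ = f k := mul_one _
              _ ≤ lam := hlam k
          exact mul_le_mul_of_nonneg_right hfq (hy0 k)
      _ = lam * ∑ k, y k := by rw [Finset.mul_sum]
      _ = lam := by rw [hy1, mul_one]
  have h3 : 0 ≤ ∑ k, f k * y k :=
    Finset.sum_nonneg fun k _ => mul_nonneg (hf k) (hy0 k)
  have h4 : ∑ k, f k * y k ≤ lam := by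
    calc ∑ k, f k * y k ≤ ∑ k, lam * y k :=
          Finset.sum_le_sum fun k _ => mul_le_mul_of_nonneg_right (hlam k) (hy0 k)
      _ = lam * ∑ k, y k := by rw [Finset.mul_sum]
      _ = lam := by rw [hy1, mul_one]
  unfold eigenB
  rw [abs_sub_le_iff]
  constructor
  · nlinarith [hy0 l, hyle l]
  · nlinarith [hy0 l, hyle l]

lemma b_lip (l : Fin N) {y y' : Fin N → ℝ} {R d : ℝ} (hR : 0 ≤ R) (hd0 : 0 ≤ d)
    (hy : ∀ i, |y i| ≤ R) (hy' : ∀ i, |y' i| ≤ R) (hdi : ∀ i, |y i - y' i| ≤ d) :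
    |eigenB N f Q y l - eigenB N f Q y' l| ≤ lam * N * (1 + 2*R) * d := by
  have hfq : ∀ k j : Fin N, 0 ≤ f k * Q k j ∧ f k * Q k j ≤ lam := by
    intro k j
    constructor
    · exact mul_nonneg (hf k) (hQ0 k j)
    · calc f k * Q k j ≤ f k * 1 :=
            mul_le_mul_of_nonneg_left (Q_le_one hf hQ0 hQ1 hlam hlam0 hm) (hf k)
        _ = f k := mul_one _
        _ ≤ lam := hlam k
  have hT1 : |∑ k, f k * Q k l * y k - ∑ k, f k * Q k l * y' k| ≤ lam * N * d := by
    rw [← Finset.sum_sub_distrib]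
    calc |∑ k, (f k * Q k l * y k - f k * Q k l * y' k)|
        ≤ ∑ k, |f k * Q k l * y k - f k * Q k l * y' k| :=
          Finset.abs_sum_le_sum_abs _ _
      _ ≤ ∑ k : Fin N, lam * d := by
          refine Finset.sum_le_sum fun k _ => ?_
          have : f k * Q k l * y k - f k * Q k l * y' k = (f k * Q k l) * (y k - y' k) := by ring
          rw [this, abs_mul, abs_of_nonneg (hfq k l).1]
          exact mul_le_mul (hfq k l).2 (hdi k) (abs_nonneg _) (le_trans (hfq k l).1 (hfq k l).2)
      _ = lam * N * d := by
          rw [Finset.sum_const, Finset.card_univ, Fintype.card_fin]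
          ring
  have hFb : ∀ w : Fin N → ℝ, (∀ i, |w i| ≤ R) → |∑ k, f k * w k| ≤ lam * N * R := by
    intro w hw
    calc |∑ k, f k * w k| ≤ ∑ k, |f k * w k| := Finset.abs_sum_le_sum_abs _ _
      _ ≤ ∑ k : Fin N, lam * R := by
          refine Finset.sum_le_sum fun k _ => ?_
          rw [abs_mul, abs_of_nonneg (hf k)]
          exact mul_le_mul (hlam k) (hw k) (abs_nonneg _) (le_trans (hf k) (hlam k))
      _ = lam * N * R := by
          rw [Finset.sum_const, Finset.card_univ, Fintype.card_fin]; ring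
  have hFd : |∑ k, f k * y k - ∑ k, f k * y' k| ≤ lam * N * d := by
    rw [← Finset.sum_sub_distrib]
    calc |∑ k, (f k * y k - f k * y' k)| ≤ ∑ k, |f k * y k - f k * y' k| :=
          Finset.abs_sum_le_sum_abs _ _
      _ ≤ ∑ k : Fin N, lam * d := by
          refine Finset.sum_le_sum fun k _ => ?_
          have : f k * y k - f k * y' k = f k * (y k - y' k) := by ring
          rw [this, abs_mul, abs_of_nonneg (hf k)]
          exact mul_le_mul (hlam k) (hdi k) (abs_nonneg _) (le_trans (hf k) (hlam k))
      _ = lam * N * d := by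
          rw [Finset.sum_const, Finset.card_univ, Fintype.card_fin]; ring
  have key : eigenB N f Q y l - eigenB N f Q y' l
      = (∑ k, f k * Q k l * y k - ∑ k, f k * Q k l * y' k)
        - ((y l - y' l) * (∑ k, f k * y k)
            + y' l * (∑ k, f k * y k - ∑ k, f k * y' k)) := by
    unfold eigenB; ring
  rw [key]
  have h5 : |(y l - y' l) * (∑ k, f k * y k)| ≤ d * (lam * N * R) := by
    rw [abs_mul]
    exact mul_le_mul (hdi l) (hFb y hy) (abs_nonneg _) hd0
  have h6 : |y' l * (∑ k, f k * y k - ∑ k, f k * y' k)| ≤ R * (lam * N * d) := by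
    rw [abs_mul]
    exact mul_le_mul (hy' l) hFd (abs_nonneg _) hR
  have h7 := abs_add_le (∑ k, f k * Q k l * y k - ∑ k, f k * Q k l * y' k)
    (-(((y l - y' l) * (∑ k, f k * y k)) + y' l * (∑ k, f k * y k - ∑ k, f k * y' k)))
  rw [abs_neg] at h7
  have h8 := abs_add_le ((y l - y' l) * (∑ k, f k * y k))
    (y' l * (∑ k, f k * y k - ∑ k, f k * y' k))
  have h9 : (∑ k, f k * Q k l * y k - ∑ k, f k * Q k l * y' k)
      + -(((y l - y' l) * (∑ k, f k * y k)) + y' l * (∑ k, f k * y k - ∑ k, f k * y' k))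
      = (∑ k, f k * Q k l * y k - ∑ k, f k * Q k l * y' k)
        - (((y l - y' l) * (∑ k, f k * y k)) + y' l * (∑ k, f k * y k - ∑ k, f k * y' k)) := by
    ring
  rw [h9] at h7
  nlinarith [h7, h8, hT1, h5, h6]

lemma b_abs (l : Fin N) {y : Fin N → ℝ} {R : ℝ} (hR : 0 ≤ R)
    (hy : ∀ i, |y i| ≤ R) : |eigenB N f Q y l| ≤ lam * N * R * (1+R) := by
  have hFb : ∀ w : Fin N → ℝ, (∀ i, |w i| ≤ R) → |∑ k, f k * w k| ≤ lam * N * R := by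
    intro w hw
    calc |∑ k, f k * w k| ≤ ∑ k, |f k * w k| := Finset.abs_sum_le_sum_abs _ _
      _ ≤ ∑ k : Fin N, lam * R := by
          refine Finset.sum_le_sum fun k _ => ?_
          rw [abs_mul, abs_of_nonneg (hf k)]
          exact mul_le_mul (hlam k) (hw k) (abs_nonneg _) (le_trans (hf k) (hlam k))
      _ = lam * N * R := by
          rw [Finset.sum_const, Finset.card_univ, Fintype.card_fin]; ring
  have h1 : |∑ k, f k * Q k l * y k| ≤ lam * N * R := by
    calc |∑ k, f k * Q k l * y k| ≤ ∑ k, |f k * Q k l * y k| :=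
          Finset.abs_sum_le_sum_abs _ _
      _ ≤ ∑ k : Fin N, lam * R := by
          refine Finset.sum_le_sum fun k _ => ?_
          rw [abs_mul]
          have hfq0 : 0 ≤ f k * Q k l := mul_nonneg (hf k) (hQ0 k l)
          have hfql : f k * Q k l ≤ lam := by
            calc f k * Q k l ≤ f k * 1 :=
                  mul_le_mul_of_nonneg_left (Q_le_one hf hQ0 hQ1 hlam hlam0 hm) (hf k)
              _ = f k := mul_one _
              _ ≤ lam := hlam k
          rw [abs_of_nonneg hfq0]
          exact mul_le_mul hfql (hy k) (abs_nonneg _) (le_trans hfq0 hfql)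
      _ = lam * N * R := by
          rw [Finset.sum_const, Finset.card_univ, Fintype.card_fin]; ring
  have h2 : |y l * ∑ k, f k * y k| ≤ R * (lam * N * R) := by
    rw [abs_mul]
    exact mul_le_mul (hy l) (hFb y hy) (abs_nonneg _) hR
  unfold eigenB
  have h3 := abs_add_le (∑ k, f k * Q k l * y k) (-(y l * ∑ k, f k * y k))
  rw [abs_neg] at h3
  have h4 : ∑ k, f k * Q k l * y k + -(y l * ∑ k, f k * y k)
      = ∑ k, f k * Q k l * y k - y l * ∑ k, f k * y k := by ring
  rw [h4] at h3
  nlinarith [h1, h2, h3]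

end basic

/-- Expectation over Moran paths of length `r` started at `z0`.
Paths are encoded as functions `ℕ → (Fin N → ℕ)` with junk value `z0` beyond
the current time horizon. -/
noncomputable def pathE (N m : ℕ) (f : Fin N → ℝ) (Q : Fin N → Fin N → ℝ)
    (lam : ℝ) (z0 : Fin N → ℕ) : (r : ℕ) → ((ℕ → (Fin N → ℕ)) → ℝ) → ℝ
  | 0, F => F (fun _ => z0)
  | (r+1), F => pathE N m f Q lam z0 r
      (fun c => ∑ z' ∈ stS N m,
        moranP N m f Q lam (c r) z' * F (Function.update c (r+1) z'))

/-- Admissible path prefixes. -/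
def Good (N m : ℕ) (f : Fin N → ℝ) (Q : Fin N → Fin N → ℝ) (lam : ℝ)
    (z0 : Fin N → ℕ) (r : ℕ) (c : ℕ → Fin N → ℕ) : Prop :=
  c 0 = z0 ∧ (∀ k ≤ r, c k ∈ stS N m) ∧
    ∀ k < r, moranP N m f Q lam (c k) (c (k+1)) ≠ 0

section path

variable {N m : ℕ} {f : Fin N → ℝ} {Q : Fin N → Fin N → ℝ} {lam : ℝ}
  {z0 : Fin N → ℕ}

lemma pathE_succ (r : ℕ) (F : (ℕ → (Fin N → ℕ)) → ℝ) :
    pathE N m f Q lam z0 (r+1) F = pathE N m f Q lam z0 r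
      (fun c => ∑ z' ∈ stS N m,
        moranP N m f Q lam (c r) z' * F (Function.update c (r+1) z')) := rfl

lemma pathE_ext {r : ℕ} {F G : (ℕ → (Fin N → ℕ)) → ℝ} (h : ∀ c, F c = G c) :
    pathE N m f Q lam z0 r F = pathE N m f Q lam z0 r G :=
  congrArg (pathE N m f Q lam z0 r) (funext h)

lemma pathE_add {r : ℕ} (F G : (ℕ → (Fin N → ℕ)) → ℝ) :
    pathE N m f Q lam z0 r (fun c => F c + G c)
      = pathE N m f Q lam z0 r F + pathE N m f Q lam z0 r G := by
  induction r generalizing F G with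
  | zero => rfl
  | succ r ih =>
    rw [pathE_succ, pathE_succ, pathE_succ, ← ih]
    apply pathE_ext
    intro c
    rw [← Finset.sum_add_distrib]
    exact Finset.sum_congr rfl fun z' _ => by ring

lemma pathE_mul_const {r : ℕ} (a : ℝ) (F : (ℕ → (Fin N → ℕ)) → ℝ) :
    pathE N m f Q lam z0 r (fun c => a * F c) = a * pathE N m f Q lam z0 r F := by
  induction r generalizing F with
  | zero => rfl
  | succ r ih =>
    rw [pathE_succ, pathE_succ, ← ih]
    apply pathE_ext
    intro c
    rw [Finset.mul_sum]
    exact Finset.sum_congr rfl fun z' _ => by ring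

variable (hf : ∀ j, 0 ≤ f j) (hQ0 : ∀ i j, 0 ≤ Q i j) (hQ1 : ∀ i, ∑ j, Q i j = 1)
  (hlam : ∀ j, f j ≤ lam) (hlam0 : 0 < lam) (hm : 1 ≤ m) (hz0S : z0 ∈ stS N m)

include hf hQ0 hQ1 hlam hlam0 hm hz0S

omit hf hQ0 hQ1 hlam hlam0 hm hz0S in
lemma Good.update {r : ℕ} {c : ℕ → Fin N → ℕ} (hc : Good N m f Q lam z0 r c)
    {z' : Fin N → ℕ} (hz' : z' ∈ stS N m)
    (hp : moranP N m f Q lam (c r) z' ≠ 0) :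
    Good N m f Q lam z0 (r+1) (Function.update c (r+1) z') := by
  have h0 : Function.update c (r+1) z' 0 = c 0 :=
    Function.update_of_ne (by omega) _ _
  have hval : ∀ k ≤ r, Function.update c (r+1) z' k = c k := fun k hk =>
    Function.update_of_ne (by omega) _ _
  refine ⟨h0.trans hc.1, fun k hk => ?_, fun k hk => ?_⟩
  · by_cases hkr : k = r + 1
    · subst hkr; rw [Function.update_self]; exact hz'
    · rw [hval k (by omega)]; exact hc.2.1 k (by omega)
  · by_cases hkr : k = r
    · rw [hkr, hval r le_rfl, Function.update_self]
      exact hp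
    · rw [hval k (by omega), hval (k+1) (by omega)]
      exact hc.2.2 k (by omega)

omit hf hQ0 hQ1 hlam hlam0 hm in
lemma Good.base : Good N m f Q lam z0 0 (fun _ => z0) :=
  ⟨rfl, fun k _ => hz0S, fun k hk => absurd hk (by omega)⟩

lemma pathE_congr {r : ℕ} {F G : (ℕ → (Fin N → ℕ)) → ℝ}
    (h : ∀ c, Good N m f Q lam z0 r c → F c = G c) :
    pathE N m f Q lam z0 r F = pathE N m f Q lam z0 r G := by
  induction r generalizing F G with
  | zero => exact h _ (Good.base hz0S)
  | succ r ih =>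
    rw [pathE_succ, pathE_succ]
    apply ih
    intro c hc
    refine Finset.sum_congr rfl fun z' hz' => ?_
    by_cases hp : moranP N m f Q lam (c r) z' = 0
    · rw [hp, zero_mul, zero_mul]
    · rw [h _ (hc.update hz' hp)]

lemma pathE_mono {r : ℕ} {F G : (ℕ → (Fin N → ℕ)) → ℝ}
    (h : ∀ c, Good N m f Q lam z0 r c → F c ≤ G c) :
    pathE N m f Q lam z0 r F ≤ pathE N m f Q lam z0 r G := by
  induction r generalizing F G with
  | zero => exact h _ (Good.base hz0S)
  | succ r ih =>
    rw [pathE_succ, pathE_succ]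
    apply ih
    intro c hc
    refine Finset.sum_le_sum fun z' hz' => ?_
    by_cases hp : moranP N m f Q lam (c r) z' = 0
    · rw [hp, zero_mul, zero_mul]
    · refine mul_le_mul_of_nonneg_left (h _ (hc.update hz' hp)) ?_
      exact p_nonneg hf hQ0 hQ1 hlam hlam0 hm (hc.2.1 r le_rfl)

lemma pathE_const {r : ℕ} (a : ℝ) :
    pathE N m f Q lam z0 r (fun _ => a) = a := by
  induction r with
  | zero => rfl
  | succ r ih =>
    rw [pathE_succ]
    rw [pathE_congr hf hQ0 hQ1 hlam hlam0 hm hz0S (G := fun _ => a) ?_]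
    · exact ih
    · intro c hc
      rw [← Finset.sum_mul, row_sum hf hQ0 hQ1 hlam hlam0 hm (hc.2.1 r le_rfl),
        one_mul]

lemma pathE_nonneg {r : ℕ} {F : (ℕ → (Fin N → ℕ)) → ℝ}
    (h : ∀ c, Good N m f Q lam z0 r c → 0 ≤ F c) :
    0 ≤ pathE N m f Q lam z0 r F := by
  have := pathE_mono hf hQ0 hQ1 hlam hlam0 hm hz0S (F := fun _ => 0) (G := F)
    (fun c hc => h c hc)
  rwa [pathE_const hf hQ0 hQ1 hlam hlam0 hm hz0S] at this

omit hf hQ0 hQ1 hlam hlam0 hm hz0S in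
lemma pathE_finsum {r : ℕ} {ι : Type*} (t : Finset ι)
    (F : ι → (ℕ → (Fin N → ℕ)) → ℝ) :
    pathE N m f Q lam z0 r (fun c => ∑ i ∈ t, F i c)
      = ∑ i ∈ t, pathE N m f Q lam z0 r (F i) := by
  classical
  induction t using Finset.induction_on with
  | empty =>
    simp only [Finset.sum_empty]
    have : (fun _ : ℕ → Fin N → ℕ => (0:ℝ)) = fun _ => (0:ℝ) * 0 := by
      funext; ring
    rw [this, pathE_mul_const, zero_mul]
  | insert _ _ hnotmem ih =>
    rename_i a t
    simp only [Finset.sum_insert hnotmem]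
    rw [pathE_add, ih]

lemma pathE_tower {r s : ℕ} {F : (ℕ → (Fin N → ℕ)) → ℝ}
    (hF : ∀ c k z', r < k → F (Function.update c k z') = F c) :
    pathE N m f Q lam z0 (r + s) F = pathE N m f Q lam z0 r F := by
  induction s with
  | zero => rfl
  | succ s ih =>
    have hrw : r + (s+1) = (r+s) + 1 := rfl
    rw [hrw, pathE_succ]
    rw [pathE_congr hf hQ0 hQ1 hlam hlam0 hm hz0S (G := F) ?_]
    · exact ih
    · intro c hc
      have h1 : ∀ z' : Fin N → ℕ, moranP N m f Q lam (c (r+s)) z'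
            * F (Function.update c (r+s+1) z')
          = moranP N m f Q lam (c (r+s)) z' * F c := fun z' => by
        rw [hF c _ z' (by omega)]
      rw [Finset.sum_congr rfl (fun z' _ => h1 z'), ← Finset.sum_mul,
        row_sum hf hQ0 hQ1 hlam hlam0 hm (hc.2.1 (r+s) le_rfl), one_mul]

omit hf hQ0 hQ1 hlam hlam0 hm hz0S in
lemma pathE_zero (F : (ℕ → (Fin N → ℕ)) → ℝ) :
    pathE N m f Q lam z0 0 F = F (fun _ => z0) := rfl

end path

/-- The (m-scaled) martingale part of the rescaled Moran chain along a path. -/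
noncomputable def NrM (N m : ℕ) (f : Fin N → ℝ) (Q : Fin N → Fin N → ℝ)
    (lam : ℝ) (r : ℕ) (c : ℕ → Fin N → ℕ) (l : Fin N) : ℝ :=
  ((c r l : ℝ) - (c 0 l : ℝ))
    - ∑ k ∈ Finset.range r, (1/lam) * eigenB N f Q (fun i => (c k i : ℝ)/m) l

section mart

variable {N m : ℕ} {f : Fin N → ℝ} {Q : Fin N → Fin N → ℝ} {lam : ℝ}
  {z0 : Fin N → ℕ}

lemma NrM_update {r k : ℕ} (hk : r < k) (c : ℕ → Fin N → ℕ) (z' : Fin N → ℕ)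
    (l : Fin N) :
    NrM N m f Q lam r (Function.update c k z') l = NrM N m f Q lam r c l := by
  have hval : ∀ k' ≤ r, Function.update c k z' k' = c k' := fun k' hk' =>
    Function.update_of_ne (by omega) _ _
  unfold NrM
  rw [hval r le_rfl, hval 0 (by omega)]
  congr 1
  refine Finset.sum_congr rfl fun k' hk' => ?_
  rw [hval k' (le_of_lt (Finset.mem_range.mp hk'))]

lemma NrM_succ (r : ℕ) (c : ℕ → Fin N → ℕ) (z' : Fin N → ℕ) (l : Fin N) :
    NrM N m f Q lam (r+1) (Function.update c (r+1) z') l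
      = NrM N m f Q lam r c l
        + (((z' l : ℝ) - (c r l : ℝ))
            - (1/lam) * eigenB N f Q (fun i => (c r i : ℝ)/m) l) := by
  have hval : ∀ k ≤ r, Function.update c (r+1) z' k = c k := fun k hk =>
    Function.update_of_ne (by omega) _ _
  unfold NrM
  rw [Function.update_self, hval 0 (by omega), Finset.sum_range_succ, hval r le_rfl]
  have : ∀ k ∈ Finset.range r, (1/lam) * eigenB N f Q
        (fun i => ((Function.update c (r+1) z' k i : ℝ))/m) l
      = (1/lam) * eigenB N f Q (fun i => ((c k i : ℝ))/m) l := fun k hk => by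
    rw [hval k (le_of_lt (Finset.mem_range.mp hk))]
  rw [Finset.sum_congr rfl this]
  ring

variable (hf : ∀ j, 0 ≤ f j) (hQ0 : ∀ i j, 0 ≤ Q i j) (hQ1 : ∀ i, ∑ j, Q i j = 1)
  (hlam : ∀ j, f j ≤ lam) (hlam0 : 0 < lam) (hm : 1 ≤ m) (hz0S : z0 ∈ stS N m)

include hf hQ0 hQ1 hlam hlam0 hm hz0S

omit hz0S in
lemma stS_simplex {z : Fin N → ℕ} (hz : z ∈ stS N m) :
    (∀ i, 0 ≤ (z i : ℝ)/m) ∧ ∑ i, (z i : ℝ)/m = 1 := by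
  constructor
  · intro i; positivity
  · rw [← Finset.sum_div, cast_sum_stS hf hQ0 hQ1 hlam hlam0 hm hz]
    have hmR : (0:ℝ) < m := by exact_mod_cast hm
    field_simp

omit hz0S in
lemma sum_p_sq_bound {z : Fin N → ℕ} (hz : z ∈ stS N m) (a : ℝ) (l : Fin N) :
    ∑ z' ∈ stS N m, moranP N m f Q lam z z'
        * (a + (((z' l:ℝ) - (z l:ℝ))
            - (1/lam) * eigenB N f Q (fun k => (z k:ℝ)/m) l))^2
      ≤ a^2 + 1 := by
  set B := (1/lam) * eigenB N f Q (fun k => (z k:ℝ)/m) l with hB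
  have hexp : ∀ z' : Fin N → ℕ, moranP N m f Q lam z z'
        * (a + (((z' l:ℝ) - (z l:ℝ)) - B))^2
      = (a - B)^2 * moranP N m f Q lam z z'
        + (2*(a-B)) * (moranP N m f Q lam z z' * ((z' l:ℝ) - (z l:ℝ)))
        + moranP N m f Q lam z z' * ((z' l:ℝ) - (z l:ℝ))^2 := fun z' => by ring
  rw [Finset.sum_congr rfl (fun z' _ => hexp z'), Finset.sum_add_distrib,
    Finset.sum_add_distrib, ← Finset.mul_sum, ← Finset.mul_sum,
    row_sum hf hQ0 hQ1 hlam hlam0 hm hz, drift hf hQ0 hQ1 hlam hlam0 hm hz l,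
    ← hB]
  have hsq : ∑ z' ∈ stS N m, moranP N m f Q lam z z' * ((z' l:ℝ) - (z l:ℝ))^2
      ≤ ∑ z' ∈ stS N m, moranP N m f Q lam z z' := by
    refine Finset.sum_le_sum fun z' _ => ?_
    by_cases hp : moranP N m f Q lam z z' = 0
    · rw [hp]; simp
    · have hd := p_step_bound hf hQ0 hQ1 hlam hlam0 hm hz hp l
      have hd2 := abs_le.mp hd
      have hsq1 : ((z' l:ℝ) - (z l:ℝ))^2 ≤ 1 := by nlinarith [hd2.1, hd2.2]
      calc moranP N m f Q lam z z' * ((z' l:ℝ) - (z l:ℝ))^2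
          ≤ moranP N m f Q lam z z' * 1 :=
            mul_le_mul_of_nonneg_left hsq1 (p_nonneg hf hQ0 hQ1 hlam hlam0 hm hz)
        _ = moranP N m f Q lam z z' := mul_one _
  rw [row_sum hf hQ0 hQ1 hlam hlam0 hm hz] at hsq
  nlinarith [hsq, sq_nonneg B]

lemma pathE_NrM_sq (l : Fin N) (r : ℕ) :
    pathE N m f Q lam z0 r (fun c => (NrM N m f Q lam r c l)^2) ≤ (r : ℝ) := by
  induction r with
  | zero =>
    rw [pathE_zero]
    simp [NrM]
  | succ r ih =>
    rw [pathE_succ]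
    have key : ∀ c, Good N m f Q lam z0 r c →
        (∑ z' ∈ stS N m, moranP N m f Q lam (c r) z'
          * (NrM N m f Q lam (r+1) (Function.update c (r+1) z') l)^2)
        ≤ (NrM N m f Q lam r c l)^2 + 1 := by
      intro c hc
      have h1 : ∀ z' ∈ stS N m, moranP N m f Q lam (c r) z'
            * (NrM N m f Q lam (r+1) (Function.update c (r+1) z') l)^2
          = moranP N m f Q lam (c r) z'
            * ((NrM N m f Q lam r c l) + (((z' l:ℝ) - (c r l:ℝ))
                - (1/lam) * eigenB N f Q (fun k => (c r k:ℝ)/m) l))^2 :=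
        fun z' _ => by rw [NrM_succ]
      rw [Finset.sum_congr rfl h1]
      exact sum_p_sq_bound hf hQ0 hQ1 hlam hlam0 hm (hc.2.1 r le_rfl)
        (NrM N m f Q lam r c l) l
    calc pathE N m f Q lam z0 r (fun c => ∑ z' ∈ stS N m,
            moranP N m f Q lam (c r) z'
              * (NrM N m f Q lam (r+1) (Function.update c (r+1) z') l)^2)
        ≤ pathE N m f Q lam z0 r (fun c => (NrM N m f Q lam r c l)^2 + 1) :=
          pathE_mono hf hQ0 hQ1 hlam hlam0 hm hz0S key
      _ = pathE N m f Q lam z0 r (fun c => (NrM N m f Q lam r c l)^2) + 1 := by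
          rw [pathE_add]
          rw [pathE_const hf hQ0 hQ1 hlam hlam0 hm hz0S]
      _ ≤ (r : ℝ) + 1 := by linarith [ih]
      _ = ((r+1 : ℕ) : ℝ) := by push_cast; ring

omit hz0S in
lemma NrM_step (r : ℕ) (c : ℕ → Fin N → ℕ) (hck : c r ∈ stS N m)
    (hp : moranP N m f Q lam (c r) (c (r+1)) ≠ 0) (l : Fin N) :
    |NrM N m f Q lam (r+1) c l - NrM N m f Q lam r c l| ≤ 3 := by
  have he : NrM N m f Q lam (r+1) c l - NrM N m f Q lam r c l
      = ((c (r+1) l:ℝ) - (c r l : ℝ))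
        - (1/lam) * eigenB N f Q (fun i => (c r i:ℝ)/m) l := by
    unfold NrM; rw [Finset.sum_range_succ]; ring
  rw [he]
  have h1 : |(c (r+1) l:ℝ) - (c r l:ℝ)| ≤ 1 :=
    p_step_bound hf hQ0 hQ1 hlam hlam0 hm hck hp l
  have hsimp := stS_simplex hf hQ0 hQ1 hlam hlam0 hm hck
  have h2 : |eigenB N f Q (fun i => (c r i:ℝ)/m) l| ≤ 2*lam :=
    b_bound hf hQ0 hQ1 hlam hlam0 hm l hsimp.1 hsimp.2
  have h3 : |(1/lam) * eigenB N f Q (fun i => (c r i:ℝ)/m) l| ≤ 2 := by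
    rw [abs_mul, abs_of_nonneg (by positivity : (0:ℝ) ≤ 1/lam)]
    calc (1/lam) * |eigenB N f Q (fun i => (c r i:ℝ)/m) l|
        ≤ (1/lam) * (2*lam) := mul_le_mul_of_nonneg_left h2 (by positivity)
      _ = 2 := by field_simp
  calc |((c (r+1) l:ℝ) - (c r l:ℝ))
        - (1/lam) * eigenB N f Q (fun i => (c r i:ℝ)/m) l|
      ≤ |(c (r+1) l:ℝ) - (c r l:ℝ)|
        + |(1/lam) * eigenB N f Q (fun i => (c r i:ℝ)/m) l| := abs_sub _ _
    _ ≤ 1 + 2 := add_le_add h1 h3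
    _ = 3 := by norm_num

omit hz0S in
lemma NrM_diff {n : ℕ} {c : ℕ → Fin N → ℕ} (hc : Good N m f Q lam z0 n c)
    (l : Fin N) (g : ℕ) :
    ∀ r, g ≤ r → r ≤ n →
      |NrM N m f Q lam r c l - NrM N m f Q lam g c l| ≤ 3 * ((r:ℝ) - g) := by
  intro r
  induction r with
  | zero =>
    intro h1 _
    have hg : g = 0 := by omega
    subst hg; simp
  | succ r ih =>
    intro h1 h2
    by_cases hgr : g = r+1
    · rw [hgr]; simp
    · have hg : g ≤ r := by omega
      have h3 := NrM_step hf hQ0 hQ1 hlam hlam0 hm r c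
        (hc.2.1 r (by omega)) (hc.2.2 r (by omega)) l
      have h4 := ih hg (by omega)
      have h5 : |NrM N m f Q lam (r+1) c l - NrM N m f Q lam g c l|
          ≤ |NrM N m f Q lam (r+1) c l - NrM N m f Q lam r c l|
            + |NrM N m f Q lam r c l - NrM N m f Q lam g c l| := abs_sub_le _ _ _
      have hgr2 : (g:ℝ) ≤ r := by exact_mod_cast hg
      push_cast
      push_cast at h4
      linarith

lemma prob_bound (n s : ℕ) (hs1 : 1 ≤ s) (η : ℝ) (hη : 0 < η)
    (hsm : 3 * (s:ℝ) ≤ η * m / 2)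
    (F : (ℕ → (Fin N → ℕ)) → ℝ)
    (hF01 : ∀ c, F c = 0 ∨ F c = 1)
    (hFbad : ∀ c, Good N m f Q lam z0 n c → F c = 1 →
      ∃ r ≤ n, ∃ l : Fin N, η * m < |NrM N m f Q lam r c l|) :
    pathE N m f Q lam z0 n F
      ≤ ((n/s + 1 : ℕ) : ℝ) * (N : ℝ) * ((2/(η*m))^2 * n) := by
  have hmR : (0:ℝ) < m := by exact_mod_cast hm
  have hηm : (0:ℝ) < η * m := by positivity
  -- pointwise comparison with a sum of indicators at grid points
  have hpoint : ∀ c, Good N m f Q lam z0 n c →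
      F c ≤ ∑ q ∈ Finset.range (n/s + 1), ∑ l : Fin N,
        (if η * m / 2 < |NrM N m f Q lam (q*s) c l| then (1:ℝ) else 0) := by
    intro c hc
    rcases hF01 c with h0 | h1
    · rw [h0]
      refine Finset.sum_nonneg fun q _ => Finset.sum_nonneg fun l _ => ?_
      split <;> norm_num
    · rw [h1]
      obtain ⟨r, hrn, l, hl⟩ := hFbad c hc h1
      have hqmem : r/s ∈ Finset.range (n/s + 1) := by
        rw [Finset.mem_range]
        have : r/s ≤ n / s := Nat.div_le_div_right hrn
        omega
      have hgs : (r/s) * s ≤ r := Nat.div_mul_le_self r s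
      have hdm := Nat.div_add_mod' r s
      have hmodlt := Nat.mod_lt r (show 0 < s by omega)
      have hrg : r - (r/s) * s < s := by omega
      have hterm : (if η * m / 2 < |NrM N m f Q lam ((r/s)*s) c l|
          then (1:ℝ) else 0) = 1 := by
        rw [if_pos]
        have hdiff := NrM_diff hf hQ0 hQ1 hlam hlam0 hm hc l ((r/s)*s) r hgs hrn
        have habs : |NrM N m f Q lam r c l|
            ≤ |NrM N m f Q lam ((r/s)*s) c l|
              + |NrM N m f Q lam r c l - NrM N m f Q lam ((r/s)*s) c l| := by
          have := abs_add_le (NrM N m f Q lam ((r/s)*s) c l)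
            (NrM N m f Q lam r c l - NrM N m f Q lam ((r/s)*s) c l)
          simpa using this
        have hcast : ((r:ℝ) - (((r/s)*s : ℕ):ℝ)) ≤ (s:ℝ) := by
          have h6 : r - (r/s)*s ≤ s := by omega
          have h7 : ((r - (r/s)*s : ℕ) : ℝ) = (r:ℝ) - (((r/s)*s : ℕ):ℝ) := by
            push_cast [Nat.cast_sub hgs]
            ring
          rw [← h7]
          exact_mod_cast h6
        nlinarith [hdiff, habs, hl]
      calc (1:ℝ) = (if η * m / 2 < |NrM N m f Q lam ((r/s)*s) c l|
              then (1:ℝ) else 0) := hterm.symm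
        _ ≤ ∑ l' : Fin N, (if η * m / 2 < |NrM N m f Q lam ((r/s)*s) c l'|
              then (1:ℝ) else 0) := by
            refine Finset.single_le_sum (f := fun l' => if η * m / 2
              < |NrM N m f Q lam ((r/s)*s) c l'| then (1:ℝ) else 0)
              (fun l' _ => by split <;> norm_num) (Finset.mem_univ l)
        _ ≤ ∑ q ∈ Finset.range (n/s + 1), ∑ l' : Fin N,
              (if η * m / 2 < |NrM N m f Q lam (q*s) c l'| then (1:ℝ) else 0) := by
            refine Finset.single_le_sum (f := fun q => ∑ l' : Fin N,
              (if η * m / 2 < |NrM N m f Q lam (q*s) c l'| then (1:ℝ) else 0))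
              (fun q _ => Finset.sum_nonneg fun l' _ => ?_) hqmem
            split <;> norm_num
  -- expectation of each grid indicator via Chebyshev
  have hcheb : ∀ q ∈ Finset.range (n/s + 1), ∀ l : Fin N,
      pathE N m f Q lam z0 n (fun c =>
        if η * m / 2 < |NrM N m f Q lam (q*s) c l| then (1:ℝ) else 0)
      ≤ (2/(η*m))^2 * n := by
    intro q hq l
    have hqn : q * s ≤ n := by
      have hq1 : q ≤ n / s := by
        rw [Finset.mem_range] at hq; omega
      calc q * s ≤ (n/s) * s := Nat.mul_le_mul_right s hq1
        _ ≤ n := Nat.div_mul_le_self n s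
    have htow : pathE N m f Q lam z0 n (fun c =>
          if η * m / 2 < |NrM N m f Q lam (q*s) c l| then (1:ℝ) else 0)
        = pathE N m f Q lam z0 (q*s) (fun c =>
          if η * m / 2 < |NrM N m f Q lam (q*s) c l| then (1:ℝ) else 0) := by
      have hn : q*s + (n - q*s) = n := by omega
      rw [← hn]
      refine pathE_tower hf hQ0 hQ1 hlam hlam0 hm hz0S ?_
      intro c k z' hk
      rw [NrM_update hk]
    rw [htow]
    have hmono : pathE N m f Q lam z0 (q*s) (fun c =>
          if η * m / 2 < |NrM N m f Q lam (q*s) c l| then (1:ℝ) else 0)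
        ≤ pathE N m f Q lam z0 (q*s) (fun c =>
          (2/(η*m))^2 * (NrM N m f Q lam (q*s) c l)^2) := by
      refine pathE_mono hf hQ0 hQ1 hlam hlam0 hm hz0S fun c _ => ?_
      split
      · rename_i hgt
        have h2 : (η*m/2)^2 < (NrM N m f Q lam (q*s) c l)^2 := by
          have := pow_lt_pow_left₀ hgt (by positivity : (0:ℝ) ≤ η*m/2) (two_ne_zero)
          rwa [sq_abs] at this
        have h3 : (2/(η*m))^2 * (η*m/2)^2 = 1 := by
          rw [div_pow, div_pow, div_mul_div_comm]
          rw [div_eq_one_iff_eq (by positivity)]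
          ring
        nlinarith [h2, sq_nonneg (2/(η*m))]
      · positivity
    refine hmono.trans ?_
    rw [pathE_mul_const]
    have hvar := pathE_NrM_sq hf hQ0 hQ1 hlam hlam0 hm hz0S l (q*s)
    have hc : ((q*s : ℕ):ℝ) ≤ (n:ℝ) := by exact_mod_cast hqn
    have h4 : (0:ℝ) ≤ (2/(η*m))^2 := by positivity
    calc (2/(η*m))^2 * pathE N m f Q lam z0 (q*s)
          (fun c => (NrM N m f Q lam (q*s) c l)^2)
        ≤ (2/(η*m))^2 * ((q*s : ℕ):ℝ) := mul_le_mul_of_nonneg_left hvar h4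
      _ ≤ (2/(η*m))^2 * (n:ℝ) := mul_le_mul_of_nonneg_left hc h4
  -- put everything together
  calc pathE N m f Q lam z0 n F
      ≤ pathE N m f Q lam z0 n (fun c => ∑ q ∈ Finset.range (n/s + 1),
          ∑ l : Fin N, (if η * m / 2 < |NrM N m f Q lam (q*s) c l|
            then (1:ℝ) else 0)) :=
        pathE_mono hf hQ0 hQ1 hlam hlam0 hm hz0S hpoint
    _ = ∑ q ∈ Finset.range (n/s + 1), ∑ l : Fin N,
          pathE N m f Q lam z0 n (fun c =>
            if η * m / 2 < |NrM N m f Q lam (q*s) c l| then (1:ℝ) else 0) := by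
        rw [pathE_finsum]
        exact Finset.sum_congr rfl fun q _ => by rw [pathE_finsum]
    _ ≤ ∑ q ∈ Finset.range (n/s + 1), ∑ _l : Fin N, (2/(η*m))^2 * (n:ℝ) := by
        exact Finset.sum_le_sum fun q hq => Finset.sum_le_sum fun l _ =>
          hcheb q hq l
    _ = ((n/s + 1 : ℕ) : ℝ) * (N : ℝ) * ((2/(η*m))^2 * n) := by
        rw [Finset.sum_const, Finset.sum_const, Finset.card_univ,
          Fintype.card_fin, Finset.card_range]
        simp [nsmul_eq_mul]
        ring

end mart

/-- Truncated embedding of a finite path into an infinite one, with junk `z0`. -/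
def emb (N : ℕ) (z0 : Fin N → ℕ) (n : ℕ) (c : Fin (n+1) → (Fin N → ℕ)) :
    ℕ → (Fin N → ℕ) :=
  fun k => if hk : k < n+1 then c ⟨k, hk⟩ else z0

lemma emb_lt {N : ℕ} {z0 : Fin N → ℕ} {n : ℕ} {c : Fin (n+1) → (Fin N → ℕ)}
    {k : ℕ} (hk : k < n+1) : emb N z0 n c k = c ⟨k, hk⟩ := dif_pos hk

lemma emb_ge {N : ℕ} {z0 : Fin N → ℕ} {n : ℕ} {c : Fin (n+1) → (Fin N → ℕ)}
    {k : ℕ} (hk : ¬ k < n+1) : emb N z0 n c k = z0 := dif_neg hk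

section pathsum

variable {N m : ℕ} {f : Fin N → ℝ} {Q : Fin N → Fin N → ℝ} {lam : ℝ}
  {z0 : Fin N → ℕ}

variable (hz0S : z0 ∈ stS N m)

include hz0S

lemma pathE_eq_sum (n : ℕ) (F : (ℕ → (Fin N → ℕ)) → ℝ) :
    pathE N m f Q lam z0 n F
      = ∑ c ∈ Fintype.piFinset (fun _ : Fin (n+1) => stS N m),
          (if c 0 = z0 then ∏ k : Fin n,
            moranP N m f Q lam (c k.castSucc) (c k.succ) else 0)
            * F (emb N z0 n c) := by
  induction n generalizing F with
  | zero =>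
    rw [pathE_zero]
    rw [Finset.sum_eq_single (fun _ : Fin 1 => z0)]
    · have h1 : emb N z0 0 (fun _ => z0) = fun _ => z0 := by
        funext k; unfold emb; split <;> rfl
      rw [h1, if_pos rfl]
      simp
    · intro b _ hbne
      have hb0 : ¬ b 0 = z0 := by
        intro h0
        apply hbne
        funext k
        have hk : k = 0 := Subsingleton.elim k 0
        rw [hk, h0]
      rw [if_neg hb0, zero_mul]
    · intro hmem
      exfalso; apply hmem
      rw [Fintype.mem_piFinset]; intro _; exact hz0S
  | succ n ih =>
    rw [pathE_succ, ih]
    have hsplit : ∑ c ∈ Fintype.piFinset (fun _ : Fin (n+2) => stS N m),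
        ((if c 0 = z0 then ∏ k : Fin (n+1),
          moranP N m f Q lam (c k.castSucc) (c k.succ) else 0)
          * F (emb N z0 (n+1) c))
      = ∑ cp ∈ (Fintype.piFinset (fun _ : Fin (n+1) => stS N m)) ×ˢ stS N m,
          ((if (Fin.snoc cp.1 cp.2 : Fin (n+2) → (Fin N → ℕ)) 0 = z0 then
              ∏ k : Fin (n+1), moranP N m f Q lam
                ((Fin.snoc cp.1 cp.2 : Fin (n+2) → (Fin N → ℕ)) k.castSucc)
                ((Fin.snoc cp.1 cp.2 : Fin (n+2) → (Fin N → ℕ)) k.succ) else 0)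
            * F (emb N z0 (n+1) (Fin.snoc cp.1 cp.2))) := by
      refine Finset.sum_nbij'
        (i := fun c => ((Fin.init c, c (Fin.last (n+1))) :
          (Fin (n+1) → (Fin N → ℕ)) × (Fin N → ℕ)))
        (j := fun cp => Fin.snoc cp.1 cp.2) ?_ ?_ ?_ ?_ ?_
      · intro c hc
        rw [Fintype.mem_piFinset] at hc
        rw [Finset.mem_product]
        constructor
        · rw [Fintype.mem_piFinset]
          intro k
          exact hc k.castSucc
        · exact hc (Fin.last (n+1))
      · intro cp hcp
        rw [Finset.mem_product] at hcp
        rw [Fintype.mem_piFinset]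
        intro k
        induction k using Fin.lastCases with
        | last => rw [Fin.snoc_last]; exact hcp.2
        | cast k =>
          rw [Fin.snoc_castSucc]
          exact Fintype.mem_piFinset.mp hcp.1 k
      · intro c _
        dsimp only
        exact Fin.snoc_init_self c
      · intro cp _
        rw [Fin.init_snoc, Fin.snoc_last]
      · intro c _
        dsimp only
        rw [Fin.snoc_init_self]
    rw [hsplit, Finset.sum_product]
    refine Finset.sum_congr rfl fun c hc => ?_
    have hc' := Fintype.mem_piFinset.mp hc
    -- pointwise identities
    have hsnoc0 : ∀ z' : Fin N → ℕ,
        (Fin.snoc c z' : Fin (n+2) → (Fin N → ℕ)) 0 = c 0 := by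
      intro z'
      rw [← Fin.castSucc_zero, Fin.snoc_castSucc]
    have hprod : ∀ z' : Fin N → ℕ,
        (∏ k : Fin (n+1), moranP N m f Q lam
          ((Fin.snoc c z' : Fin (n+2) → (Fin N → ℕ)) k.castSucc)
          ((Fin.snoc c z' : Fin (n+2) → (Fin N → ℕ)) k.succ))
        = (∏ k : Fin n, moranP N m f Q lam (c k.castSucc) (c k.succ))
            * moranP N m f Q lam (c (Fin.last n)) z' := by
      intro z'
      rw [Fin.prod_univ_castSucc]
      congr 1
      · refine Finset.prod_congr rfl fun k _ => ?_
        rw [Fin.succ_castSucc, Fin.snoc_castSucc, Fin.snoc_castSucc]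
      · rw [Fin.succ_last, Fin.snoc_last, Fin.snoc_castSucc]
    have hemb : ∀ z' : Fin N → ℕ,
        emb N z0 (n+1) (Fin.snoc c z')
          = Function.update (emb N z0 n c) (n+1) z' := by
      intro z'
      funext k
      by_cases hk : k < n+1
      · rw [Function.update_of_ne (by omega), emb_lt (show k < n+2 by omega),
          emb_lt hk]
        have hcast : (⟨k, show k < n+2 by omega⟩ : Fin (n+2))
            = (⟨k, hk⟩ : Fin (n+1)).castSucc := by
          apply Fin.ext; rfl
        rw [hcast, Fin.snoc_castSucc]
      · by_cases hk2 : k = n+1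
        · subst hk2
          rw [Function.update_self, emb_lt (show n+1 < n+2 by omega)]
          have hlast : (⟨n+1, show n+1 < n+2 by omega⟩ : Fin (n+2))
              = Fin.last (n+1) := by apply Fin.ext; rfl
          rw [hlast, Fin.snoc_last]
        · rw [Function.update_of_ne (by omega), emb_ge (by omega),
            emb_ge (by omega)]
    have hembn : (emb N z0 n c) n = c (Fin.last n) := by
      rw [emb_lt (show n < n+1 by omega)]
      congr 1
    rw [Finset.mul_sum]
    refine Finset.sum_congr rfl fun z' _ => ?_
    rw [hsnoc0 z', hprod z', hemb z', hembn]
    by_cases h0 : c 0 = z0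
    · rw [if_pos h0, if_pos h0]; ring
    · rw [if_neg h0, if_neg h0]; ring

end pathsum

section bridge

open MeasureTheory

variable {N m : ℕ} {f : Fin N → ℝ} {Q : Fin N → Fin N → ℝ} {lam : ℝ}
  {z0 : Fin N → ℕ} {Ω : Type*} [MeasurableSpace Ω] {P : Measure Ω}
  {Z : ℕ → Ω → (Fin N → ℕ)}

variable (hP : IsProbabilityMeasure P)
  (hZ0' : ∀ ω, Z 0 ω = z0)
  (hMk : ∀ (n : ℕ) (h : ℕ → (Fin N → ℕ)) (z' : Fin N → ℕ),
    P {ω | (∀ k ≤ n, Z k ω = h k) ∧ Z (n+1) ω = z'}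
      = ENNReal.ofReal (moranP N m f Q lam (h n) z')
          * P {ω | ∀ k ≤ n, Z k ω = h k})

include hP hZ0' hMk

lemma cyl_measure (n : ℕ) (h : ℕ → (Fin N → ℕ)) :
    P {ω | ∀ k ≤ n, Z k ω = h k}
      = (if h 0 = z0 then 1 else 0)
        * ∏ k ∈ Finset.range n,
            ENNReal.ofReal (moranP N m f Q lam (h k) (h (k+1))) := by
  induction n with
  | zero =>
    have hset : {ω | ∀ k ≤ 0, Z k ω = h k} = {ω | Z 0 ω = h 0} := by
      ext ω; constructor
      · intro hω; exact hω 0 le_rfl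
      · intro hω k hk
        have hk0 : k = 0 := Nat.le_zero.mp hk
        rw [hk0]; exact hω
    rw [hset, Finset.range_zero, Finset.prod_empty, mul_one]
    by_cases h0 : h 0 = z0
    · rw [if_pos h0]
      have huniv : {ω | Z 0 ω = h 0} = Set.univ := by
        ext ω; simp [hZ0' ω, h0]
      rw [huniv, measure_univ]
    · rw [if_neg h0]
      have hempty : {ω | Z 0 ω = h 0} = ∅ := by
        ext ω
        simp only [Set.mem_setOf_eq, Set.mem_empty_iff_false, iff_false]
        rw [hZ0' ω]
        exact fun hc => h0 hc.symm
      rw [hempty, measure_empty]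
  | succ n ih =>
    have hset : {ω | ∀ k ≤ n+1, Z k ω = h k}
        = {ω | (∀ k ≤ n, Z k ω = h k) ∧ Z (n+1) ω = h (n+1)} := by
      ext ω; constructor
      · intro hω; exact ⟨fun k hk => hω k (by omega), hω (n+1) le_rfl⟩
      · rintro ⟨h1, h2⟩ k hk
        rcases Nat.lt_or_ge k (n+1) with hk' | hk'
        · exact h1 k (by omega)
        · have hkn : k = n+1 := by omega
          rw [hkn]; exact h2
    rw [hset, hMk n h (h (n+1)), ih, Finset.prod_range_succ]
    ring

variable (hf : ∀ j, 0 ≤ f j) (hQ0 : ∀ i j, 0 ≤ Q i j) (hQ1 : ∀ i, ∑ j, Q i j = 1)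
  (hlam : ∀ j, f j ≤ lam) (hlam0 : 0 < lam) (hm : 1 ≤ m) (hz0S : z0 ∈ stS N m)

include hf hQ0 hQ1 hlam hlam0 hm hz0S

lemma cyl_null (n : ℕ) (h : ℕ → (Fin N → ℕ))
    (hbad : ¬ (h 0 = z0 ∧ ∀ k ≤ n, h k ∈ stS N m)) :
    P {ω | ∀ k ≤ n, Z k ω = h k} = 0 := by
  classical
  rw [cyl_measure hP hZ0' hMk]
  by_cases h0 : h 0 = z0
  · rw [if_pos h0]
    push_neg at hbad
    obtain ⟨k, hk, hkS⟩ := hbad h0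
    have hex : ∃ k, k ≤ n ∧ h k ∉ stS N m := ⟨k, hk, hkS⟩
    have hk0 := Nat.find_spec hex
    set k0 := Nat.find hex with hk0def
    have hk0pos : 1 ≤ k0 := by
      rcases Nat.eq_zero_or_pos k0 with h' | h'
      · exfalso
        have hmem : h 0 ∈ stS N m := h0 ▸ hz0S
        rw [h'] at hk0
        exact hk0.2 hmem
      · exact h'
    have hprev : h (k0 - 1) ∈ stS N m := by
      by_contra hc
      exact Nat.find_min hex (show k0 - 1 < k0 by omega) ⟨by omega, hc⟩
    have hfac : moranP N m f Q lam (h (k0-1)) (h k0) = 0 :=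
      p_escape hf hQ0 hQ1 hlam hlam0 hm hprev hk0.2
    have hk0n : k0 - 1 ∈ Finset.range n := by
      rw [Finset.mem_range]; omega
    have hzero : (∏ k ∈ Finset.range n,
        ENNReal.ofReal (moranP N m f Q lam (h k) (h (k+1)))) = 0 := by
      apply Finset.prod_eq_zero hk0n
      rw [show k0 - 1 + 1 = k0 by omega, hfac, ENNReal.ofReal_zero]
    rw [hzero, mul_zero]
  · rw [if_neg h0, zero_mul]

lemma measure_le_pathE (E : Set Ω) (n : ℕ) (F : (ℕ → (Fin N → ℕ)) → ℝ)
    (hF0 : ∀ c, 0 ≤ F c)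
    (hE : ∀ ω ∈ E, ∀ c : ℕ → (Fin N → ℕ),
      (∀ k ≤ n, c k = Z k ω) → 1 ≤ F c) :
    P E ≤ ENNReal.ofReal (pathE N m f Q lam z0 n F) := by
  classical
  set A : (Fin (n+1) → (Fin N → ℕ)) → Set Ω :=
    fun c => {ω | ∀ k ≤ n, Z k ω = emb N z0 n c k} with hA
  have hcover : E ⊆ ⋃ c, E ∩ A c := by
    intro ω hω
    refine Set.mem_iUnion.mpr ⟨fun k => Z k ω, hω, ?_⟩
    intro k hk
    rw [emb_lt (show k < n+1 by omega)]
  have hsub : P E ≤ ∑' c : Fin (n+1) → (Fin N → ℕ), P (E ∩ A c) :=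
    (measure_mono hcover).trans (measure_iUnion_le _)
  set g : (Fin (n+1) → (Fin N → ℕ)) → ℝ := fun c =>
    if c ∈ Fintype.piFinset (fun _ : Fin (n+1) => stS N m) ∧ c 0 = z0 then
      (∏ k : Fin n, moranP N m f Q lam (c k.castSucc) (c k.succ))
        * min 1 (F (emb N z0 n c)) else 0 with hg
  have hterm : ∀ c, P (E ∩ A c) ≤ ENNReal.ofReal (g c) := by
    intro c
    by_cases hcond : c ∈ Fintype.piFinset (fun _ : Fin (n+1) => stS N m)
        ∧ c 0 = z0
    · rcases Set.eq_empty_or_nonempty (E ∩ A c) with hemp | ⟨ω0, hω0⟩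
      · rw [hemp, measure_empty]; exact zero_le
      · have hc' := Fintype.mem_piFinset.mp hcond.1
        have hF1 : 1 ≤ F (emb N z0 n c) := by
          apply hE ω0 hω0.1
          intro k hk
          exact (hω0.2 k hk).symm
        have hmin : min 1 (F (emb N z0 n c)) = 1 := min_eq_left hF1
        have hPA : P (A c) = ENNReal.ofReal (∏ k : Fin n,
            moranP N m f Q lam (c k.castSucc) (c k.succ)) := by
          rw [hA]
          rw [cyl_measure hP hZ0' hMk n (emb N z0 n c)]
          have he0 : emb N z0 n c 0 = z0 := by
            rw [emb_lt (show 0 < n+1 by omega)]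
            have h00 : (⟨0, show 0 < n+1 by omega⟩ : Fin (n+1)) = 0 := by
              apply Fin.ext; rfl
            rw [h00]; exact hcond.2
          rw [if_pos he0, one_mul]
          have hfin : ∏ k ∈ Finset.range n,
              ENNReal.ofReal (moranP N m f Q lam (emb N z0 n c k)
                (emb N z0 n c (k+1)))
              = ∏ k : Fin n, ENNReal.ofReal
                  (moranP N m f Q lam (c k.castSucc) (c k.succ)) := by
            rw [← Fin.prod_univ_eq_prod_range (fun k =>
              ENNReal.ofReal (moranP N m f Q lam (emb N z0 n c k)
                (emb N z0 n c (k+1)))) n]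
            refine Finset.prod_congr rfl fun k _ => ?_
            have e1 : emb N z0 n c (k : ℕ) = c k.castSucc := by
              rw [emb_lt (show (k:ℕ) < n+1 by omega)]
              congr 1
            have e2 : emb N z0 n c ((k : ℕ)+1) = c k.succ := by
              rw [emb_lt (show (k:ℕ)+1 < n+1 by omega)]
              congr 1
            rw [e1, e2]
          rw [hfin, ← ENNReal.ofReal_prod_of_nonneg]
          intro k _
          exact p_nonneg hf hQ0 hQ1 hlam hlam0 hm (hc' k.castSucc)
        calc P (E ∩ A c) ≤ P (A c) := measure_mono Set.inter_subset_right
          _ = ENNReal.ofReal (g c) := by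
              rw [hPA, hg]
              dsimp only
              rw [if_pos hcond, hmin, mul_one]
    · have hnull : P (A c) = 0 := by
        rw [hA]
        apply cyl_null hP hZ0' hMk hf hQ0 hQ1 hlam hlam0 hm hz0S n (emb N z0 n c)
        rintro ⟨hc0, hcS⟩
        apply hcond
        constructor
        · rw [Fintype.mem_piFinset]
          intro k
          have hmem := hcS (k : ℕ) (by omega)
          rwa [emb_lt (show (k:ℕ) < n+1 by omega), Fin.eta] at hmem
        · rw [emb_lt (show 0 < n+1 by omega)] at hc0
          have h00 : (⟨0, show 0 < n+1 by omega⟩ : Fin (n+1)) = 0 := by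
            apply Fin.ext; rfl
          rwa [h00] at hc0
      have hg0 : g c = 0 := by rw [hg]; dsimp only; rw [if_neg hcond]
      calc P (E ∩ A c) ≤ P (A c) := measure_mono Set.inter_subset_right
        _ = 0 := hnull
        _ ≤ ENNReal.ofReal (g c) := zero_le
  have hts : ∑' c : Fin (n+1) → (Fin N → ℕ), ENNReal.ofReal (g c)
      = ∑ c ∈ Fintype.piFinset (fun _ : Fin (n+1) => stS N m),
          ENNReal.ofReal (g c) := by
    apply tsum_eq_sum
    intro c hc
    rw [hg]
    dsimp only
    rw [if_neg (fun hcond => hc hcond.1), ENNReal.ofReal_zero]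
  have hgnn : ∀ c ∈ Fintype.piFinset (fun _ : Fin (n+1) => stS N m), 0 ≤ g c := by
    intro c hc
    rw [hg]
    dsimp only
    split
    · rename_i hcond
      have hc' := Fintype.mem_piFinset.mp hcond.1
      refine mul_nonneg (Finset.prod_nonneg fun k _ =>
        p_nonneg hf hQ0 hQ1 hlam hlam0 hm (hc' k.castSucc)) ?_
      exact le_min zero_le_one (hF0 _)
    · exact le_rfl
  have hsum : ∑ c ∈ Fintype.piFinset (fun _ : Fin (n+1) => stS N m),
      ENNReal.ofReal (g c)
      = ENNReal.ofReal (∑ c ∈ Fintype.piFinset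
          (fun _ : Fin (n+1) => stS N m), g c) :=
    (ENNReal.ofReal_sum_of_nonneg hgnn).symm
  have hfinal : ∑ c ∈ Fintype.piFinset (fun _ : Fin (n+1) => stS N m), g c
      = pathE N m f Q lam z0 n (fun c => min 1 (F c)) := by
    rw [pathE_eq_sum hz0S n (fun c => min 1 (F c))]
    refine Finset.sum_congr rfl fun c hc => ?_
    rw [hg]
    dsimp only
    by_cases h0 : c 0 = z0
    · rw [if_pos ⟨hc, h0⟩, if_pos h0]
    · rw [if_neg (fun hcond => h0 hcond.2), if_neg h0, zero_mul]
  have hlast : pathE N m f Q lam z0 n (fun c => min 1 (F c))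
      ≤ pathE N m f Q lam z0 n F :=
    pathE_mono hf hQ0 hQ1 hlam hlam0 hm hz0S (fun c _ => min_le_right _ _)
  calc P E ≤ ∑' c : Fin (n+1) → (Fin N → ℕ), P (E ∩ A c) := hsub
    _ ≤ ∑' c : Fin (n+1) → (Fin N → ℕ), ENNReal.ofReal (g c) :=
        ENNReal.tsum_le_tsum hterm
    _ = ENNReal.ofReal (∑ c ∈ Fintype.piFinset
        (fun _ : Fin (n+1) => stS N m), g c) := by rw [hts, hsum]
    _ = ENNReal.ofReal (pathE N m f Q lam z0 n
        (fun c => min 1 (F c))) := by rw [hfinal]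
    _ ≤ ENNReal.ofReal (pathE N m f Q lam z0 n F) :=
        ENNReal.ofReal_le_ofReal hlast

end bridge

section gronwall

lemma gronwall_bound {N m : ℕ} {f : Fin N → ℝ} {Q : Fin N → Fin N → ℝ} {lam : ℝ}
    (hlam0 : 0 < lam) (hm : 1 ≤ m)
    (x : ℝ → Fin N → ℝ) {T R LL BX η : ℝ}
    (hT : 0 < T) (hR1 : 1 ≤ R) (hLL : 0 < LL) (hBX : 0 ≤ BX) (hη : 0 ≤ η)
    (hxb : ∀ t ∈ Set.Icc (0:ℝ) T, ∀ i, |x t i| ≤ R)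
    (hstepx : ∀ u v : ℝ, 0 ≤ u → u ≤ v → v ≤ T → ∀ i : Fin N,
      |x v i - x u i - (v-u) * eigenB N f Q (x u) i| ≤ LL * BX * (v-u)^2)
    (hblip : ∀ (y y' : Fin N → ℝ) (l : Fin N) (d : ℝ), 0 ≤ d →
      (∀ i, |y i| ≤ R) → (∀ i, |y' i| ≤ R) → (∀ i, |y i - y' i| ≤ d) →
      |eigenB N f Q y l - eigenB N f Q y' l| ≤ LL * d)
    {n : ℕ} (hnT : (n:ℝ) / (lam * m) ≤ T)
    {c : ℕ → Fin N → ℕ} (hcS : ∀ k ≤ n, c k ∈ stS N m)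
    (hM : ∀ r ≤ n, ∀ l, |NrM N m f Q lam r c l| ≤ η * m)
    {E0 : ℝ} (hE00 : 0 ≤ E0)
    (hE0 : ∀ l, |(c 0 l : ℝ)/m - x 0 l| ≤ E0) :
    ∀ r ≤ n, ∀ l, |(c r l : ℝ)/m - x ((r:ℝ)/(lam*m)) l|
      ≤ (E0 + η + LL*BX*T/(lam*m)) * Real.exp (LL * T) := by
  have hmR : (0:ℝ) < m := by exact_mod_cast hm
  set τ := 1/(lam*m) with hτdef
  have hτ0 : 0 < τ := by rw [hτdef]; positivity
  have htm : ∀ k : ℕ, k ≤ n → ((k:ℝ)*τ) ∈ Set.Icc (0:ℝ) T := by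
    intro k hk
    constructor
    · positivity
    · calc (k:ℝ)*τ ≤ (n:ℝ)*τ := by
            refine mul_le_mul_of_nonneg_right ?_ hτ0.le
            exact_mod_cast hk
        _ = (n:ℝ)/(lam*m) := by rw [hτdef]; ring
        _ ≤ T := hnT
  set A := E0 + η + LL*BX*T*τ with hA
  have hA0 : 0 ≤ A := by
    rw [hA]
    have : 0 ≤ LL*BX*T*τ := by positivity
    linarith
  have hq1 : (1:ℝ) ≤ 1 + LL*τ := by nlinarith
  have hY : ∀ k, k ≤ n → ∀ i, 0 ≤ (c k i:ℝ)/m ∧ (c k i:ℝ)/m ≤ 1 := by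
    intro k hk i
    have hmem := mem_stS.mp (hcS k hk)
    have h1 : c k i ≤ m := by
      rw [← hmem]
      exact Finset.single_le_sum (f := fun j => c k j)
        (fun _ _ => Nat.zero_le _) (Finset.mem_univ i)
    constructor
    · positivity
    · rw [div_le_one hmR]; exact_mod_cast h1
  have hid : ∀ r, ∀ l : Fin N, (c r l:ℝ)/m - x ((r:ℝ)*τ) l
      = (((c 0 l:ℝ)/m - x 0 l) + (NrM N m f Q lam r c l)/m)
        + ∑ k ∈ Finset.range r,
            (τ * eigenB N f Q (fun i => (c k i:ℝ)/m) l
              - (x (((k:ℝ)+1)*τ) l - x ((k:ℝ)*τ) l)) := by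
    intro r l
    have htel := Finset.sum_range_sub (fun k : ℕ => x ((k:ℝ)*τ) l) r
    have htel' : ∑ k ∈ Finset.range r, (x (((k:ℝ)+1)*τ) l - x ((k:ℝ)*τ) l)
        = x ((r:ℝ)*τ) l - x ((0:ℝ)*τ) l := by
      push_cast at htel
      rw [← htel]
    rw [Finset.sum_sub_distrib, htel']
    have hsum2 : ∑ k ∈ Finset.range r, τ * eigenB N f Q (fun i => (c k i:ℝ)/m) l
        = (1/(m:ℝ)) * ∑ k ∈ Finset.range r,
            (1/lam) * eigenB N f Q (fun i => (c k i:ℝ)/m) l := by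
      rw [Finset.mul_sum]
      refine Finset.sum_congr rfl fun k _ => ?_
      rw [hτdef]; ring
    rw [hsum2]
    unfold NrM
    have h00 : ((0:ℝ)*τ) = 0 := by ring
    rw [h00]
    field_simp
    ring
  have hmain : ∀ r, r ≤ n → ∀ l : Fin N,
      |(c r l:ℝ)/m - x ((r:ℝ)*τ) l| ≤ A * (1+LL*τ)^r := by
    intro r
    induction r using Nat.strong_induction_on with
    | _ r ih =>
      intro hrn l
      rw [hid r l]
      have h1 : |(c 0 l:ℝ)/m - x 0 l| ≤ E0 := hE0 l
      have h2 : |(NrM N m f Q lam r c l)/m| ≤ η := by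
        rw [abs_div, abs_of_nonneg hmR.le, div_le_iff₀ hmR]
        exact hM r hrn l
      have hterm : ∀ k ∈ Finset.range r,
          |τ * eigenB N f Q (fun i => (c k i:ℝ)/m) l
            - (x (((k:ℝ)+1)*τ) l - x ((k:ℝ)*τ) l)|
          ≤ τ*LL*(A*(1+LL*τ)^k) + LL*BX*τ^2 := by
        intro k hk
        have hkr := Finset.mem_range.mp hk
        have hkn : k ≤ n := by omega
        have hk1n : k+1 ≤ n := by omega
        have hb1 : |eigenB N f Q (fun i => (c k i:ℝ)/m) l
            - eigenB N f Q (x ((k:ℝ)*τ)) l| ≤ LL * (A*(1+LL*τ)^k) := by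
          refine hblip _ _ _ _ (by positivity) ?_ ?_ ?_
          · intro i
            have hYk := hY k hkn i
            rw [abs_of_nonneg hYk.1]
            exact hYk.2.trans hR1
          · intro i
            exact hxb _ (htm k hkn) i
          · intro i
            exact ih k hkr hkn i
        have hv : ((k:ℝ)*τ) ≤ ((k:ℝ)+1)*τ := by nlinarith
        have hvT : ((k:ℝ)+1)*τ ≤ T := by
          have := (htm (k+1) hk1n).2
          have hcast : (((k+1:ℕ)):ℝ) = (k:ℝ)+1 := by push_cast; ring
          rwa [hcast] at this
        have hb2 := hstepx ((k:ℝ)*τ) (((k:ℝ)+1)*τ) (by positivity) hv hvT l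
        have hvu : (((k:ℝ)+1)*τ - (k:ℝ)*τ) = τ := by ring
        rw [hvu] at hb2
        have hdec : τ * eigenB N f Q (fun i => (c k i:ℝ)/m) l
              - (x (((k:ℝ)+1)*τ) l - x ((k:ℝ)*τ) l)
            = τ * (eigenB N f Q (fun i => (c k i:ℝ)/m) l
                - eigenB N f Q (x ((k:ℝ)*τ)) l)
              - (x (((k:ℝ)+1)*τ) l - x ((k:ℝ)*τ) l
                  - τ * eigenB N f Q (x ((k:ℝ)*τ)) l) := by ring
        rw [hdec]
        have habs := abs_sub (τ * (eigenB N f Q (fun i => (c k i:ℝ)/m) l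
            - eigenB N f Q (x ((k:ℝ)*τ)) l))
          (x (((k:ℝ)+1)*τ) l - x ((k:ℝ)*τ) l - τ * eigenB N f Q (x ((k:ℝ)*τ)) l)
        have hm1 : |τ * (eigenB N f Q (fun i => (c k i:ℝ)/m) l
            - eigenB N f Q (x ((k:ℝ)*τ)) l)| ≤ τ * (LL * (A*(1+LL*τ)^k)) := by
          rw [abs_mul, abs_of_nonneg hτ0.le]
          exact mul_le_mul_of_nonneg_left hb1 hτ0.le
        calc |τ * (eigenB N f Q (fun i => (c k i:ℝ)/m) l
              - eigenB N f Q (x ((k:ℝ)*τ)) l)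
            - (x (((k:ℝ)+1)*τ) l - x ((k:ℝ)*τ) l
                - τ * eigenB N f Q (x ((k:ℝ)*τ)) l)|
            ≤ τ * (LL * (A*(1+LL*τ)^k)) + LL*BX*τ^2 := by
              refine habs.trans (add_le_add hm1 hb2)
          _ = τ*LL*(A*(1+LL*τ)^k) + LL*BX*τ^2 := by ring
      have habs2 : |(((c 0 l:ℝ)/m - x 0 l) + (NrM N m f Q lam r c l)/m)
          + ∑ k ∈ Finset.range r,
            (τ * eigenB N f Q (fun i => (c k i:ℝ)/m) l
              - (x (((k:ℝ)+1)*τ) l - x ((k:ℝ)*τ) l))|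
          ≤ (E0 + η) + ∑ k ∈ Finset.range r,
              (τ*LL*(A*(1+LL*τ)^k) + LL*BX*τ^2) := by
        calc |(((c 0 l:ℝ)/m - x 0 l) + (NrM N m f Q lam r c l)/m)
            + ∑ k ∈ Finset.range r,
              (τ * eigenB N f Q (fun i => (c k i:ℝ)/m) l
                - (x (((k:ℝ)+1)*τ) l - x ((k:ℝ)*τ) l))|
            ≤ |((c 0 l:ℝ)/m - x 0 l) + (NrM N m f Q lam r c l)/m|
              + |∑ k ∈ Finset.range r,
                (τ * eigenB N f Q (fun i => (c k i:ℝ)/m) l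
                  - (x (((k:ℝ)+1)*τ) l - x ((k:ℝ)*τ) l))| := abs_add_le _ _
          _ ≤ (|(c 0 l:ℝ)/m - x 0 l| + |(NrM N m f Q lam r c l)/m|)
              + ∑ k ∈ Finset.range r,
                |τ * eigenB N f Q (fun i => (c k i:ℝ)/m) l
                  - (x (((k:ℝ)+1)*τ) l - x ((k:ℝ)*τ) l)| :=
              add_le_add (abs_add_le _ _) (Finset.abs_sum_le_sum_abs _ _)
          _ ≤ (E0 + η) + ∑ k ∈ Finset.range r,
              (τ*LL*(A*(1+LL*τ)^k) + LL*BX*τ^2) :=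
              add_le_add (add_le_add h1 h2) (Finset.sum_le_sum hterm)
      refine habs2.trans ?_
      have hgeo : ∑ k ∈ Finset.range r, ((1:ℝ)+LL*τ)^k
          = ((1+LL*τ)^r - 1)/(LL*τ) := by
        have hne : (1:ℝ)+LL*τ ≠ 1 := by nlinarith
        rw [geom_sum_eq hne r]
        congr 1
        ring
      have hsum : ∑ k ∈ Finset.range r, (τ*LL*(A*(1+LL*τ)^k) + LL*BX*τ^2)
          = (τ*LL*A) * (((1+LL*τ)^r - 1)/(LL*τ)) + r*(LL*BX*τ^2) := by
        rw [Finset.sum_add_distrib, Finset.sum_const, Finset.card_range,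
          nsmul_eq_mul, ← hgeo, Finset.mul_sum]
        congr 1
        refine Finset.sum_congr rfl fun k _ => ?_
        ring
      rw [hsum]
      have heq1 : (τ*LL*A) * (((1+LL*τ)^r - 1)/(LL*τ)) = A*((1+LL*τ)^r - 1) := by
        have hLLτ : LL*τ ≠ 0 := by positivity
        field_simp
      rw [heq1]
      have hrτ : (r:ℝ)*τ ≤ T := (htm r hrn).2
      have hr2 : (r:ℝ)*(LL*BX*τ^2) ≤ T*(LL*BX*τ) := by
        have : (r:ℝ)*(LL*BX*τ^2) = ((r:ℝ)*τ)*(LL*BX*τ) := by ring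
        rw [this]
        exact mul_le_mul_of_nonneg_right hrτ (by positivity)
      have hrw : (r:ℝ)*(LL*BX*τ^2) = (r:ℝ)*(LL*BX*τ^2) := rfl
      rw [hA]
      nlinarith [hr2]
  intro r hrn l
  have h := hmain r hrn l
  have hqexp : (1+LL*τ)^r ≤ Real.exp (LL*T) := by
    have h1 : (1+LL*τ) ≤ Real.exp (LL*τ) := by
      have := Real.add_one_le_exp (LL*τ)
      linarith
    have h2 : (1+LL*τ)^r ≤ (Real.exp (LL*τ))^r :=
      pow_le_pow_left₀ (by positivity) h1 r
    rw [← Real.exp_nat_mul] at h2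
    refine h2.trans (Real.exp_le_exp.mpr ?_)
    have hrτ : (r:ℝ)*τ ≤ T := (htm r hrn).2
    nlinarith [hLL.le, hτ0.le]
  have hcon : ((r:ℝ)/(lam*m)) = (r:ℝ)*τ := by rw [hτdef]; ring
  rw [hcon]
  have hAeq : E0 + η + LL*BX*T/(lam*(m:ℝ)) = A := by rw [hA, hτdef]; ring
  rw [hAeq]
  calc |(c r l:ℝ)/m - x ((r:ℝ)*τ) l| ≤ A * (1+LL*τ)^r := h
    _ ≤ A * Real.exp (LL*T) := mul_le_mul_of_nonneg_left hqexp hA0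

end gronwall

end MoranAux

open MeasureTheory Filter

/-- Convergence of the Moran model to Eigen's quasispecies model: if the initial
conditions `Z₀/m` converge to `x⁰`, then the rescaled and time-accelerated Moran
chain converges in probability, uniformly on every finite time interval, to the
solution of Eigen's equations started at `x⁰`. -/
theorem moran_converges_to_eigen
    (N : ℕ) (hN : 1 ≤ N) (f : Fin N → ℝ) (hf : ∀ j, 0 ≤ f j)
    (Q : Fin N → Fin N → ℝ) (hQ0 : ∀ i j, 0 ≤ Q i j) (hQ1 : ∀ i, ∑ j, Q i j = 1)
    (lam : ℝ) (hlam : ∀ j, f j ≤ lam) (hlam0 : 0 < lam)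
    -- the Moran chains, one for each population size `m`
    (Ω : ℕ → Type*) [∀ m, MeasurableSpace (Ω m)]
    (P : ∀ m, Measure (Ω m)) (hP : ∀ m, IsProbabilityMeasure (P m))
    (Z : ∀ m : ℕ, ℕ → Ω m → (Fin N → ℕ))
    (hZmeas : ∀ m n, Measurable (Z m n))
    -- deterministic initial conditions lying in `P^m_N`
    (z0 : ∀ m : ℕ, Fin N → ℕ)
    (hz0 : ∀ m, 1 ≤ m → ∑ i, z0 m i = m)
    (hZ0 : ∀ m, 1 ≤ m → ∀ ω, Z m 0 ω = z0 m)
    -- Markov property with the Moran transition matrix `p`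
    (hMarkov : ∀ m, 1 ≤ m → ∀ n : ℕ, ∀ h : ℕ → (Fin N → ℕ), ∀ z' : Fin N → ℕ,
      P m {ω | (∀ k ≤ n, Z m k ω = h k) ∧ Z m (n + 1) ω = z'}
        = ENNReal.ofReal (moranP N m f Q lam (h n) z')
          * P m {ω | ∀ k ≤ n, Z m k ω = h k})
    -- convergence of the initial conditions to `x⁰ ∈ S_N`
    (x0 : Fin N → ℝ) (hx0 : (∀ i, 0 ≤ x0 i) ∧ ∑ i, x0 i = 1)
    (hinit : Tendsto
      (fun m : ℕ => Real.sqrt (∑ i, ((z0 m i : ℝ) / m - x0 i) ^ 2)) atTop (nhds 0))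
    -- `x` is the solution of Eigen's equations with `x(0) = x⁰`
    (x : ℝ → Fin N → ℝ) (hxinit : x 0 = x0)
    (hxderiv : ∀ t ≥ (0 : ℝ), ∀ i, HasDerivWithinAt (fun s => x s i)
      (∑ j, f j * Q j i * x t j - x t i * ∑ j, f j * x t j) (Set.Ici 0) t) :
    ∀ δ > (0 : ℝ), ∀ T > (0 : ℝ),
      Tendsto (fun m : ℕ => P m {ω | ∃ t ∈ Set.Icc (0 : ℝ) T,
          δ < Real.sqrt (∑ i,
            ((Z m ⌊lam * m * t⌋₊ ω i : ℝ) / m - x t i) ^ 2)})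
        atTop (nhds 0) := by
  classical
  open MoranAux in
  intro δ hδ T hT
  have hxd : ∀ t ≥ (0:ℝ), ∀ i, HasDerivWithinAt (fun s => x s i)
      (MoranAux.eigenB N f Q (x t) i) (Set.Ici 0) t := fun t ht i => by
    have := hxderiv t ht i
    simpa [MoranAux.eigenB] using this
  -- continuity and boundedness of x on [0, T]
  have hcont : ∀ i, ContinuousOn (fun s => x s i) (Set.Icc 0 T) := fun i t ht =>
    ((hxd t ht.1 i).continuousWithinAt).mono Set.Icc_subset_Ici_self
  have hCb : ∀ i : Fin N, ∃ C, ∀ t ∈ Set.Icc (0:ℝ) T, ‖x t i‖ ≤ C := fun i =>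
    isCompact_Icc.exists_bound_of_continuousOn (hcont i)
  choose C hC using hCb
  set R : ℝ := 1 + ∑ i, |C i| with hRdef
  have hCsum : (0:ℝ) ≤ ∑ i, |C i| := Finset.sum_nonneg fun i _ => abs_nonneg _
  have hR1 : 1 ≤ R := by rw [hRdef]; linarith
  have hR0 : (0:ℝ) ≤ R := by linarith
  have hxb : ∀ t ∈ Set.Icc (0:ℝ) T, ∀ i, |x t i| ≤ R := by
    intro t ht i
    calc |x t i| ≤ C i := by
          have := hC i t ht; rwa [Real.norm_eq_abs] at this
      _ ≤ |C i| := le_abs_self _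
      _ ≤ ∑ j, |C j| := Finset.single_le_sum (f := fun j => |C j|)
          (fun j _ => abs_nonneg _) (Finset.mem_univ i)
      _ ≤ R := by rw [hRdef]; linarith
  have hNR : (0:ℝ) < N := by exact_mod_cast hN
  set LL : ℝ := lam * N * (1+2*R) with hLLdef
  have hLL : 0 < LL := by
    rw [hLLdef]
    apply mul_pos (mul_pos hlam0 hNR)
    nlinarith
  set BX : ℝ := lam * N * R * (1+R) with hBXdef
  have hBX : 0 < BX := by
    rw [hBXdef]
    apply mul_pos (mul_pos (mul_pos hlam0 hNR) (by linarith)) (by linarith)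
  have hbx : ∀ t ∈ Set.Icc (0:ℝ) T, ∀ i, |MoranAux.eigenB N f Q (x t) i| ≤ BX := by
    intro t ht i
    rw [hBXdef]
    exact MoranAux.b_abs (m := 1) hf hQ0 hQ1 hlam hlam0 le_rfl i hR0 (hxb t ht)
  have hlipx : ∀ u ∈ Set.Icc (0:ℝ) T, ∀ v ∈ Set.Icc (0:ℝ) T, ∀ i : Fin N,
      |x v i - x u i| ≤ BX * |v - u| := by
    intro u hu v hv i
    have hderiv : ∀ t ∈ Set.Icc (0:ℝ) T, HasDerivWithinAt (fun s => x s i)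
        (MoranAux.eigenB N f Q (x t) i) (Set.Icc (0:ℝ) T) t := fun t ht =>
      (hxd t ht.1 i).mono Set.Icc_subset_Ici_self
    have hbound : ∀ t ∈ Set.Icc (0:ℝ) T,
        ‖MoranAux.eigenB N f Q (x t) i‖ ≤ BX := fun t ht => by
      rw [Real.norm_eq_abs]; exact hbx t ht i
    have := (convex_Icc (0:ℝ) T).norm_image_sub_le_of_norm_hasDerivWithin_le
      hderiv hbound hu hv
    simpa [Real.norm_eq_abs] using this
  have hstepx : ∀ u v : ℝ, 0 ≤ u → u ≤ v → v ≤ T → ∀ i : Fin N,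
      |x v i - x u i - (v-u) * MoranAux.eigenB N f Q (x u) i|
        ≤ LL * BX * (v-u)^2 := by
    intro u v hu huv hvT i
    have huI : u ∈ Set.Icc (0:ℝ) T := ⟨hu, huv.trans hvT⟩
    have hvI : v ∈ Set.Icc (0:ℝ) T := ⟨hu.trans huv, hvT⟩
    have hsub : Set.Icc u v ⊆ Set.Icc (0:ℝ) T := fun s hs =>
      ⟨hu.trans hs.1, hs.2.trans hvT⟩
    have hg : ∀ t ∈ Set.Icc u v, HasDerivWithinAt
        (fun s => x s i - s * MoranAux.eigenB N f Q (x u) i)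
        (MoranAux.eigenB N f Q (x t) i - MoranAux.eigenB N f Q (x u) i)
        (Set.Icc u v) t := by
      intro t ht
      have h1 : HasDerivWithinAt (fun s => x s i)
          (MoranAux.eigenB N f Q (x t) i) (Set.Icc u v) t :=
        (hxd t (hu.trans ht.1) i).mono
          (fun s hs => Set.mem_Ici.mpr (hu.trans hs.1))
      have h2 : HasDerivWithinAt (fun s : ℝ => s * MoranAux.eigenB N f Q (x u) i)
          (MoranAux.eigenB N f Q (x u) i) (Set.Icc u v) t := by
        simpa using (hasDerivWithinAt_id t (Set.Icc u v)).mul_const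
          (MoranAux.eigenB N f Q (x u) i)
      exact h1.sub h2
    have hbound : ∀ t ∈ Set.Icc u v,
        ‖MoranAux.eigenB N f Q (x t) i - MoranAux.eigenB N f Q (x u) i‖
          ≤ LL * (BX * (v-u)) := by
      intro t ht
      rw [Real.norm_eq_abs, hLLdef]
      refine MoranAux.b_lip (m := 1) hf hQ0 hQ1 hlam hlam0 le_rfl i hR0
        (by nlinarith [hBX.le] : (0:ℝ) ≤ BX*(v-u)) (hxb t (hsub ht)) (hxb u huI) ?_
      intro j
      have h3 := hlipx u huI t (hsub ht) j
      have h4 : |t - u| ≤ v - u := by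
        rw [abs_of_nonneg (by linarith [ht.1] : (0:ℝ) ≤ t - u)]
        linarith [ht.2]
      calc |x t j - x u j| ≤ BX * |t - u| := h3
        _ ≤ BX * (v - u) := mul_le_mul_of_nonneg_left h4 hBX.le
    have hkey := (convex_Icc u v).norm_image_sub_le_of_norm_hasDerivWithin_le
      hg hbound (Set.left_mem_Icc.mpr huv) (Set.right_mem_Icc.mpr huv)
    rw [Real.norm_eq_abs, Real.norm_eq_abs] at hkey
    have he1 : x v i - v * MoranAux.eigenB N f Q (x u) i
        - (x u i - u * MoranAux.eigenB N f Q (x u) i)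
        = x v i - x u i - (v-u) * MoranAux.eigenB N f Q (x u) i := by ring
    rw [he1] at hkey
    have he2 : |v - u| = v - u := abs_of_nonneg (by linarith)
    rw [he2] at hkey
    calc |x v i - x u i - (v-u) * MoranAux.eigenB N f Q (x u) i|
        ≤ LL * (BX * (v-u)) * (v-u) := hkey
      _ = LL * BX * (v-u)^2 := by ring
  -- constants
  set CC : ℝ := Real.exp (LL*T) with hCCdef
  have hCC1 : 1 ≤ CC := Real.one_le_exp (by positivity)
  have hCC0 : 0 < CC := by linarith
  set D : ℝ := δ / (Real.sqrt N + 1) with hDdef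
  have hsN : (0:ℝ) ≤ Real.sqrt N := Real.sqrt_nonneg _
  have hD0 : 0 < D := by rw [hDdef]; positivity
  set η : ℝ := D / (4*CC) with hηdef
  have hη0 : 0 < η := by rw [hηdef]; positivity
  set Cfin : ℝ := (12*lam*T/η+1) * N * (4*lam*T/η^2) with hCfin
  -- eventual conditions on m
  have hτtend : Tendsto (fun m : ℕ => 1/(lam*(m:ℝ))) atTop (nhds 0) := by
    have hrw : (fun m : ℕ => 1/(lam*(m:ℝ))) = fun m : ℕ => (1/lam)/(m:ℝ) := by
      funext m; rw [div_div]
    rw [hrw]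
    exact tendsto_const_div_atTop_nhds_zero_nat (1/lam)
  have hev1 : ∀ᶠ m : ℕ in atTop, 1 ≤ m := eventually_ge_atTop 1
  have hev2 : ∀ᶠ m : ℕ in atTop, (12:ℝ) ≤ η * m := by
    have h1 : Tendsto (fun m : ℕ => η * (m:ℝ)) atTop atTop :=
      (tendsto_natCast_atTop_atTop).const_mul_atTop hη0
    exact h1.eventually_ge_atTop 12
  have hev3 : ∀ᶠ m : ℕ in atTop, LL*BX*T/(lam*(m:ℝ)) ≤ η := by
    have h1 : Tendsto (fun m : ℕ => (LL*BX*T) * (1/(lam*(m:ℝ)))) atTop (nhds 0) := by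
      have := hτtend.const_mul (LL*BX*T)
      simpa using this
    have h2 := h1.eventually (gt_mem_nhds hη0)
    filter_upwards [h2] with m hm2
    calc LL*BX*T/(lam*(m:ℝ)) = (LL*BX*T) * (1/(lam*(m:ℝ))) := by ring
      _ ≤ η := le_of_lt hm2
  have hev4 : ∀ᶠ m : ℕ in atTop, BX/(lam*(m:ℝ)) ≤ D/4 := by
    have h1 : Tendsto (fun m : ℕ => BX * (1/(lam*(m:ℝ)))) atTop (nhds 0) := by
      have := hτtend.const_mul BX
      simpa using this
    have h2 := h1.eventually (gt_mem_nhds (by positivity : (0:ℝ) < D/4))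
    filter_upwards [h2] with m hm2
    calc BX/(lam*(m:ℝ)) = BX * (1/(lam*(m:ℝ))) := by ring
      _ ≤ D/4 := le_of_lt hm2
  have hev5 : ∀ᶠ m : ℕ in atTop,
      Real.sqrt (∑ i, ((z0 m i : ℝ) / m - x0 i) ^ 2) ≤ η := by
    have h2 := hinit.eventually (gt_mem_nhds hη0)
    filter_upwards [h2] with m hm2
    exact le_of_lt hm2
  -- squeeze
  have hupper : Tendsto (fun m : ℕ => ENNReal.ofReal (Cfin/(m:ℝ))) atTop (nhds 0) := by
    have h1 := ENNReal.tendsto_ofReal (tendsto_const_div_atTop_nhds_zero_nat Cfin)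
    rwa [ENNReal.ofReal_zero] at h1
  refine tendsto_of_tendsto_of_tendsto_of_le_of_le' tendsto_const_nhds hupper
    (Eventually.of_forall fun m => zero_le) ?_
  filter_upwards [hev1, hev2, hev3, hev4, hev5] with m hm h12 hc3 hc4 hc5
  -- per-m setup
  haveI := hP m
  have hmR : (0:ℝ) < m := by exact_mod_cast hm
  have hz0S : z0 m ∈ MoranAux.stS N m := MoranAux.mem_stS.mpr (hz0 m hm)
  set n : ℕ := ⌊lam * (m:ℝ) * T⌋₊ with hndef
  set s : ℕ := ⌊η * (m:ℝ) / 6⌋₊ with hsdef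
  have hηm12 : (12:ℝ) ≤ η * m := h12
  have hs1 : 1 ≤ s := by
    rw [hsdef]
    apply Nat.le_floor
    push_cast
    linarith
  have hsfl : (s:ℝ) ≤ η * m / 6 := by
    rw [hsdef]
    exact Nat.floor_le (by positivity)
  have hsge : η * m / 12 ≤ (s:ℝ) := by
    rw [hsdef]
    have := Nat.lt_floor_add_one (η * (m:ℝ) / 6)
    linarith
  have hsm : 3 * (s:ℝ) ≤ η * m / 2 := by linarith
  have hnfl : (n:ℝ) ≤ lam * m * T := by
    rw [hndef]
    exact Nat.floor_le (by positivity)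
  have hnT : (n:ℝ)/(lam * m) ≤ T := by
    rw [div_le_iff₀ (by positivity)]
    nlinarith
  -- the bad-path predicate and its indicator
  set BadP : (ℕ → (Fin N → ℕ)) → Prop := fun c => ∃ t ∈ Set.Icc (0:ℝ) T,
    δ < Real.sqrt (∑ i, ((c ⌊lam * m * t⌋₊ i : ℝ)/m - x t i)^2) with hBadP
  set F : (ℕ → (Fin N → ℕ)) → ℝ := fun c => if BadP c then 1 else 0 with hF
  have hF0 : ∀ c, 0 ≤ F c := by
    intro c; rw [hF]; dsimp only; split <;> norm_num
  have hF01 : ∀ c, F c = 0 ∨ F c = 1 := by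
    intro c; rw [hF]; dsimp only; split
    · right; rfl
    · left; rfl
  -- coordinatewise initial bound
  have hcoord : ∀ l, |(z0 m l:ℝ)/m - x0 l| ≤ η := by
    intro l
    have h1 : ((z0 m l:ℝ)/m - x0 l)^2 ≤ ∑ i, ((z0 m i:ℝ)/m - x0 i)^2 :=
      Finset.single_le_sum (f := fun i => ((z0 m i:ℝ)/m - x0 i)^2)
        (fun i _ => sq_nonneg _) (Finset.mem_univ l)
    calc |(z0 m l:ℝ)/m - x0 l| = Real.sqrt (((z0 m l:ℝ)/m - x0 l)^2) :=
          (Real.sqrt_sq_eq_abs _).symm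
      _ ≤ Real.sqrt (∑ i, ((z0 m i:ℝ)/m - x0 i)^2) := Real.sqrt_le_sqrt h1
      _ ≤ η := hc5
  -- the deterministic implication
  have hFbad : ∀ c, MoranAux.Good N m f Q lam (z0 m) n c → F c = 1 →
      ∃ r ≤ n, ∃ l : Fin N, η * m < |MoranAux.NrM N m f Q lam r c l| := by
    intro c hgood hFc
    have hbad : BadP c := by
      by_contra hb
      rw [hF] at hFc
      dsimp only at hFc
      rw [if_neg hb] at hFc
      exact one_ne_zero hFc.symm
    by_contra hno
    push_neg at hno
    -- Grönwall bound
    have hE0 : ∀ l, |(c 0 l : ℝ)/m - x 0 l| ≤ η := by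
      intro l
      rw [hgood.1, hxinit]
      exact hcoord l
    have hGB := MoranAux.gronwall_bound hlam0 hm x hT hR1 hLL hBX.le hη0.le
      hxb hstepx
      (fun y y' l d hd hy hy' hdi => by
        rw [hLLdef]
        exact MoranAux.b_lip (m := 1) hf hQ0 hQ1 hlam hlam0 le_rfl l hR0 hd hy hy' hdi)
      hnT hgood.2.1 hno hη0.le hE0
    obtain ⟨t, htI, hδt⟩ := hbad
    set g : ℕ := ⌊lam * (m:ℝ) * t⌋₊ with hgdef
    have hgn : g ≤ n := by
      rw [hgdef, hndef]
      exact Nat.floor_le_floor (by nlinarith [htI.1, htI.2])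
    have hgt : (g:ℝ) ≤ lam * m * t := Nat.floor_le (by nlinarith [htI.1])
    have hgt2 : lam * m * t < (g:ℝ) + 1 := Nat.lt_floor_add_one _
    have hgτ : (g:ℝ)/(lam*m) ≤ t := by
      rw [div_le_iff₀ (by positivity)]
      nlinarith
    have hgτI : (g:ℝ)/(lam*m) ∈ Set.Icc (0:ℝ) T := by
      constructor
      · positivity
      · exact hgτ.trans htI.2
    have htdiff : t - (g:ℝ)/(lam*m) ≤ 1/(lam*m) := by
      rw [sub_le_iff_le_add]
      have hcomb : 1/(lam*(m:ℝ)) + (g:ℝ)/(lam*m) = ((g:ℝ)+1)/(lam*m) := by ring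
      rw [hcomb, le_div_iff₀ (by positivity)]
      nlinarith [hgt2]
    -- per-coordinate final bound
    have hfinal : ∀ l : Fin N, |(c g l:ℝ)/m - x t l| ≤ D := by
      intro l
      have h1 := hGB g hgn l
      have h2 := hlipx ((g:ℝ)/(lam*m)) hgτI t htI l
      have h3 : |t - (g:ℝ)/(lam*m)| ≤ 1/(lam*m) := by
        rw [abs_of_nonneg (by linarith)]
        exact htdiff
      have h4 : |x t l - x ((g:ℝ)/(lam*m)) l| ≤ BX * (1/(lam*m)) := by
        have := hlipx ((g:ℝ)/(lam*m)) hgτI t htI l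
        calc |x t l - x ((g:ℝ)/(lam*m)) l| ≤ BX * |t - (g:ℝ)/(lam*m)| := this
          _ ≤ BX * (1/(lam*m)) := mul_le_mul_of_nonneg_left h3 hBX.le
      have h5 : (η + η + LL*BX*T/(lam*m)) * CC ≤ 3*η*CC := by
        have : η + η + LL*BX*T/(lam*m) ≤ 3*η := by linarith [hc3]
        exact mul_le_mul_of_nonneg_right this hCC0.le
      have h6 : BX * (1/(lam*m)) ≤ D/4 := by
        calc BX * (1/(lam*m)) = BX/(lam*m) := by ring
          _ ≤ D/4 := hc4
      have h7 : 3*η*CC = 3*D/4 := by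
        rw [hηdef]
        field_simp
      calc |(c g l:ℝ)/m - x t l|
          ≤ |(c g l:ℝ)/m - x ((g:ℝ)/(lam*m)) l|
            + |x ((g:ℝ)/(lam*m)) l - x t l| := by
            have := abs_sub ((c g l:ℝ)/m - x ((g:ℝ)/(lam*m)) l)
              (x t l - x ((g:ℝ)/(lam*m)) l)
            have he : (c g l:ℝ)/m - x ((g:ℝ)/(lam*m)) l
                - (x t l - x ((g:ℝ)/(lam*m)) l) = (c g l:ℝ)/m - x t l := by ring
            rw [he] at this
            rw [abs_sub_comm (x ((g:ℝ)/(lam*m)) l) (x t l)]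
            exact this
        _ ≤ (η + η + LL*BX*T/(lam*m)) * CC + BX * (1/(lam*m)) := by
            refine add_le_add h1 ?_
            rw [abs_sub_comm]
            exact h4
        _ ≤ 3*D/4 + D/4 := by
            rw [← h7]
            exact add_le_add h5 h6
        _ = D := by ring
    -- contradiction with δ < sqrt(...)
    have hsum : ∑ i, ((c g i:ℝ)/m - x t i)^2 ≤ (N:ℝ) * D^2 := by
      calc ∑ i, ((c g i:ℝ)/m - x t i)^2 ≤ ∑ _i : Fin N, D^2 := by
            refine Finset.sum_le_sum fun i _ => ?_
            have := hfinal i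
            have h8 := abs_le.mp this
            nlinarith [h8.1, h8.2]
        _ = (N:ℝ) * D^2 := by
            rw [Finset.sum_const, Finset.card_univ, Fintype.card_fin,
              nsmul_eq_mul]
    have hsqrt : Real.sqrt (∑ i, ((c g i:ℝ)/m - x t i)^2)
        ≤ Real.sqrt N * D := by
      calc Real.sqrt (∑ i, ((c g i:ℝ)/m - x t i)^2)
          ≤ Real.sqrt ((N:ℝ) * D^2) := Real.sqrt_le_sqrt hsum
        _ = Real.sqrt N * Real.sqrt (D^2) := Real.sqrt_mul (by positivity) _
        _ = Real.sqrt N * D := by rw [Real.sqrt_sq hD0.le]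
    have hlt : Real.sqrt N * D < δ := by
      have h9 : (Real.sqrt N + 1) * D = δ := by
        rw [hDdef]
        field_simp
      nlinarith [hD0]
    exact absurd hδt (not_lt.mpr (hsqrt.trans hlt.le))
  -- measure bound via the bridge
  set E : Set (Ω m) := {ω | ∃ t ∈ Set.Icc (0 : ℝ) T,
      δ < Real.sqrt (∑ i, ((Z m ⌊lam * m * t⌋₊ ω i : ℝ) / m - x t i) ^ 2)} with hE
  have hEbound : ∀ ω ∈ E, ∀ c : ℕ → (Fin N → ℕ),
      (∀ k ≤ n, c k = Z m k ω) → 1 ≤ F c := by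
    intro ω hω c hmatch
    obtain ⟨t, htI, hδt⟩ := hω
    have hgn : ⌊lam * (m:ℝ) * t⌋₊ ≤ n := by
      rw [hndef]
      exact Nat.floor_le_floor (by nlinarith [htI.1, htI.2])
    have hcz : c ⌊lam * (m:ℝ) * t⌋₊ = Z m ⌊lam * (m:ℝ) * t⌋₊ ω :=
      hmatch _ hgn
    have hBc : BadP c := by
      refine ⟨t, htI, ?_⟩
      rw [hcz]
      exact hδt
    rw [hF]
    dsimp only
    rw [if_pos hBc]
  have hbridge := MoranAux.measure_le_pathE (P := P m) (Z := Z m) (z0 := z0 m)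
    (hP m) (hZ0 m hm) (hMarkov m hm) hf hQ0 hQ1 hlam hlam0 hm hz0S
    E n F hF0 hEbound
  have hgrid := MoranAux.prob_bound hf hQ0 hQ1 hlam hlam0 hm hz0S n s hs1 η hη0
    hsm F hF01 hFbad
  -- numeric bound
  have hnum : ((n/s + 1 : ℕ) : ℝ) * (N : ℝ) * ((2/(η*m))^2 * n) ≤ Cfin/m := by
    have hηm : (0:ℝ) < η * m := by positivity
    have h1 : ((n/s : ℕ):ℝ) ≤ (n:ℝ)/(s:ℝ) := Nat.cast_div_le
    have hspos : (0:ℝ) < (s:ℝ) := by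
      have : (1:ℝ) ≤ (s:ℝ) := by exact_mod_cast hs1
      linarith
    have h2 : (n:ℝ)/(s:ℝ) ≤ (lam*m*T)/((η*m)/12) := by
      apply div_le_div₀ (by positivity) hnfl (by positivity)
      exact hsge
    have h3 : (lam*m*T)/((η*m)/12) = 12*lam*T/η := by
      field_simp
    have h4 : ((n/s + 1 : ℕ) : ℝ) ≤ 12*lam*T/η + 1 := by
      push_cast
      rw [← h3]
      linarith [h1.trans h2]
    have h5 : (2/(η*m))^2 * (n:ℝ) ≤ (2/(η*m))^2 * (lam*m*T) :=
      mul_le_mul_of_nonneg_left hnfl (by positivity)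
    have h6 : (2/(η*m))^2 * (lam*m*T) = (4*lam*T/η^2)/m := by
      field_simp
      ring
    have h7 : (0:ℝ) ≤ (2/(η*m))^2 * n := by positivity
    have h8 : (0:ℝ) ≤ ((n/s + 1 : ℕ) : ℝ) := by positivity
    have h9 : (0:ℝ) < 12*lam*T/η + 1 := by positivity
    calc ((n/s + 1 : ℕ) : ℝ) * (N : ℝ) * ((2/(η*m))^2 * n)
        ≤ (12*lam*T/η + 1) * (N:ℝ) * ((2/(η*m))^2 * n) := by
          apply mul_le_mul_of_nonneg_right _ h7
          exact mul_le_mul_of_nonneg_right h4 hNR.le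
      _ ≤ (12*lam*T/η + 1) * (N:ℝ) * ((4*lam*T/η^2)/m) := by
          apply mul_le_mul_of_nonneg_left _ (by positivity)
          rw [← h6]
          exact h5
      _ = Cfin/m := by
          rw [hCfin]
          ring
  calc P m E ≤ ENNReal.ofReal (MoranAux.pathE N m f Q lam (z0 m) n F) := hbridge
    _ ≤ ENNReal.ofReal (Cfin/m) := by
        apply ENNReal.ofReal_le_ofReal
        exact hgrid.trans hnum
end
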